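/- arXiv:2205.04941 — 6 statements merged into one kernel-verified Lean document; each statement's English description precedes it below -/
import Mathlib

section
/- Let q ∈ [1, ∞), a ∈ (0, ∞], and σ < 1 − 1/q. Then for every measurable function f : (0, a) → ℝ one has (∫_0^a t^{qσ} | (1/t) ∫_0^t f(s) ds |^q dt)^{1/q} ≤ (1 − 1/q − σ)^{−1} (∫_0^a |f(t)|^q t^{qσ} dt)^{1/q}. -/
open MeasureTheory ENNReal Set intervalIntegral

private lemma measurable_rpow_const' (r : ℝ) : Measurable fun s : ℝ => s ^ r := by
  have h : (fun s : ℝ => s ^ r) = fun s =>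
      if s = 0 then (if r = 0 then 1 else 0)
      else if s < 0 then Real.exp (Real.log s * r) * Real.cos (r * Real.pi)
      else Real.exp (Real.log s * r) := by
    funext s
    rcases lt_trichotomy s 0 with h | h | h
    · rw [if_neg h.ne, if_pos h, Real.rpow_def_of_neg h, mul_comm r]
    · subst h; rw [if_pos rfl]
      rcases eq_or_ne r 0 with h0 | h0 <;> simp [h0, Real.zero_rpow]
    · rw [if_neg h.ne', if_neg (not_lt.mpr h.le), Real.rpow_def_of_pos h]
  rw [h]
  refine Measurable.ite (MeasurableSet.singleton 0) measurable_const ?_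
  exact Measurable.ite measurableSet_Iio
    (((Real.measurable_log.mul_const r).exp).mul_const _)
    ((Real.measurable_log.mul_const r).exp)

private lemma lint_Ioo {r t : ℝ} (hr : -1 < r) (ht : 0 < t) :
    ∫⁻ s in Set.Ioo 0 t, ENNReal.ofReal (s ^ r) = ENNReal.ofReal (t ^ (r + 1) / (r + 1)) := by
  have hint : IntegrableOn (fun s : ℝ => s ^ r) (Set.Ioo 0 t) := by
    have h := (intervalIntegrable_rpow' (a := 0) (b := t) hr)
    rw [intervalIntegrable_iff_integrableOn_Ioc_of_le ht.le] at h
    exact h.mono_set Set.Ioo_subset_Ioc_self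
  rw [← ofReal_integral_eq_lintegral_ofReal hint ?nn]
  case nn =>
    filter_upwards [ae_restrict_mem measurableSet_Ioo] with s hs
    exact Real.rpow_nonneg hs.1.le r
  congr 1
  rw [← MeasureTheory.integral_Ioc_eq_integral_Ioo, ← intervalIntegral.integral_of_le ht.le]
  rw [integral_rpow (Or.inl hr), Real.zero_rpow (by linarith), sub_zero]

private lemma lint_Ioi {r s : ℝ} (hr : r < -1) (hs : 0 < s) :
    ∫⁻ t in Set.Ioi s, ENNReal.ofReal (t ^ r) = ENNReal.ofReal (s ^ (r + 1) / (-(r + 1))) := by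
  have hint : IntegrableOn (fun t : ℝ => t ^ r) (Set.Ioi s) :=
    (integrableOn_Ioi_rpow_iff hs).mpr hr
  rw [← ofReal_integral_eq_lintegral_ofReal hint ?nn]
  case nn =>
    filter_upwards [ae_restrict_mem measurableSet_Ioi] with t ht
    exact Real.rpow_nonneg (le_of_lt (hs.trans ht)) r
  congr 1
  rw [integral_Ioi_rpow_of_lt hr hs, div_neg, neg_div]

/-- Weighted Hardy inequality on (0, a), where `a ∈ (0, ∞]` is an extended real.
Both sides are interpreted in the extended nonnegative reals. -/
theorem hardy_inequality (q σ : ℝ) (a : ℝ≥0∞) (hq : 1 ≤ q) (ha : 0 < a)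
    (hσ : σ < 1 - 1 / q) (f : ℝ → ℝ) (hf : Measurable f) :
    (∫⁻ t in {t : ℝ | 0 < t ∧ ENNReal.ofReal t < a},
        ENNReal.ofReal (t ^ (q * σ) * |(1 / t) * ∫ s in Set.Ioo 0 t, f s| ^ q)) ^ (1 / q)
      ≤ ENNReal.ofReal ((1 - 1 / q - σ)⁻¹) *
        (∫⁻ t in {t : ℝ | 0 < t ∧ ENNReal.ofReal t < a},
          ENNReal.ofReal (|f t| ^ q * t ^ (q * σ))) ^ (1 / q) := by
  have hq0 : (0:ℝ) < q := lt_of_lt_of_le one_pos hq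
  set cc : ℝ := 1 - 1 / q - σ with hcc_def
  have hc : 0 < cc := sub_pos.mpr hσ
  set β : ℝ := cc + q * σ with hβ_def
  set e : ℝ := -cc - 1 with he_def
  set S : Set ℝ := {t : ℝ | 0 < t ∧ ENNReal.ofReal t < a} with hS_def
  have hSmeas : MeasurableSet S :=
    MeasurableSet.inter measurableSet_Ioi (ENNReal.measurable_ofReal measurableSet_Iio)
  have hSdown : ∀ t ∈ S, Set.Ioo (0:ℝ) t ⊆ S := by
    intro t ht s hs
    exact ⟨hs.1, lt_of_le_of_lt (ENNReal.ofReal_le_ofReal hs.2.le) ht.2⟩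
  set g : ℝ → ℝ≥0∞ := fun s => ENNReal.ofReal |f s| with hg_def
  have hgm : Measurable g := hf.abs.ennreal_ofReal
  set φ : ℝ → ℝ≥0∞ := fun s => ENNReal.ofReal (s ^ β) * g s ^ q with hφ_def
  have hφm : Measurable φ :=
    ((measurable_rpow_const' β).ennreal_ofReal).mul (hgm.pow_const q)
  have hφ_ne_top : ∀ s, φ s ≠ ∞ := by
    intro s
    exact ENNReal.mul_ne_top ENNReal.ofReal_ne_top
      (ENNReal.rpow_ne_top_of_nonneg hq0.le ENNReal.ofReal_ne_top)
  -- Step 1 : pointwise bound on the integrand of the LHS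
  have step1 : ∀ t ∈ S, ENNReal.ofReal (t ^ (q * σ) * |(1 / t) * ∫ s in Set.Ioo 0 t, f s| ^ q)
      ≤ ENNReal.ofReal (t ^ (q * σ - q)) * (∫⁻ s in Set.Ioo 0 t, g s) ^ q := by
    intro t ht
    have ht0 : 0 < t := ht.1
    set X : ℝ := ∫ s in Set.Ioo 0 t, f s with hX
    have habs : |(1 / t) * X| = (1 / t) * |X| := by
      rw [abs_mul, abs_of_pos (by positivity : (0:ℝ) < 1 / t)]
    have hexp : q * σ + (-1) * q = q * σ - q := by ring
    have hreal : t ^ (q * σ) * |(1 / t) * X| ^ q = t ^ (q * σ - q) * |X| ^ q := by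
      rw [habs, Real.mul_rpow (by positivity) (abs_nonneg X), one_div,
        ← Real.rpow_neg_one t, ← Real.rpow_mul ht0.le, ← mul_assoc,
        ← Real.rpow_add ht0, hexp]
    rw [hreal, ENNReal.ofReal_mul (Real.rpow_nonneg ht0.le _)]
    refine mul_le_mul_right ?_ _
    have h1 : ENNReal.ofReal (|X| ^ q) = ENNReal.ofReal |X| ^ q :=
      (ENNReal.ofReal_rpow_of_nonneg (abs_nonneg X) hq0.le).symm
    rw [h1]
    refine ENNReal.rpow_le_rpow ?_ hq0.le
    calc ENNReal.ofReal |X| = ‖X‖ₑ := (Real.enorm_eq_ofReal_abs X).symm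
      _ ≤ ∫⁻ s in Set.Ioo 0 t, ‖f s‖ₑ := enorm_integral_le_lintegral_enorm _
      _ = ∫⁻ s in Set.Ioo 0 t, g s := by
          simp only [hg_def, Real.enorm_eq_ofReal_abs]
  -- Step 2 : Hölder inequality (key estimate)
  have key : ∀ t ∈ S, (∫⁻ s in Set.Ioo 0 t, g s) ^ q
      ≤ ENNReal.ofReal ((t ^ cc / cc) ^ (q - 1)) * ∫⁻ s in Set.Ioo 0 t, φ s := by
    intro t ht
    have ht0 : 0 < t := ht.1
    rcases eq_or_lt_of_le hq with hq1 | hq1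
    · -- q = 1
      have hβ0 : β = 0 := by rw [hβ_def, hcc_def, ← hq1]; ring
      have hgφ : ∀ s ∈ Set.Ioo (0:ℝ) t, φ s = g s := by
        intro s hs
        rw [hφ_def]
        simp [hβ0, ← hq1]
      rw [setLIntegral_congr_fun measurableSet_Ioo hgφ, ← hq1]
      simp
    · -- q > 1
      have hqne : q ≠ 0 := hq0.ne'
      have hq1ne : q - 1 ≠ 0 := sub_ne_zero.mpr (ne_of_gt hq1)
      set q' : ℝ := q / (q - 1) with hq'_def
      have hq'c : q'.HolderConjugate q := (Real.HolderConjugate.conjExponent hq1).symm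
      set α : ℝ := -cc / q - σ with hα_def
      have hαq' : α * q' = cc - 1 := by
        rw [hα_def, hq'_def, hcc_def]
        field_simp
        ring
      have hαq : -α * q = β := by
        rw [hα_def, hβ_def, hcc_def]
        field_simp
        ring
      set u : ℝ → ℝ≥0∞ := fun s => ENNReal.ofReal (s ^ α) with hu_def
      set v : ℝ → ℝ≥0∞ := fun s => ENNReal.ofReal (s ^ (-α)) * g s with hv_def
      have hum : Measurable u := (measurable_rpow_const' α).ennreal_ofReal
      have hvm : Measurable v := ((measurable_rpow_const' (-α)).ennreal_ofReal).mul hgm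
      have huv : ∀ s ∈ Set.Ioo (0:ℝ) t, g s = (u * v) s := by
        intro s hs
        have hs0 : 0 < s := hs.1
        simp only [hu_def, hv_def, Pi.mul_apply, ← mul_assoc,
          ← ENNReal.ofReal_mul (Real.rpow_nonneg hs0.le α),
          ← Real.rpow_add hs0, add_neg_cancel, Real.rpow_zero, ENNReal.ofReal_one, one_mul]
      have hholder := ENNReal.lintegral_mul_le_Lp_mul_Lq (volume.restrict (Set.Ioo 0 t)) hq'c
        hum.aemeasurable hvm.aemeasurable
      have hA : ∫⁻ s in Set.Ioo 0 t, u s ^ q' = ENNReal.ofReal (t ^ cc / cc) := by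
        have h1 : ∀ s ∈ Set.Ioo (0:ℝ) t, u s ^ q' = ENNReal.ofReal (s ^ (α * q')) := by
          intro s hs
          rw [hu_def]
          simp only
          rw [ENNReal.ofReal_rpow_of_pos (Real.rpow_pos_of_pos hs.1 α),
            ← Real.rpow_mul hs.1.le]
        rw [setLIntegral_congr_fun measurableSet_Ioo h1, hαq']
        have h2 := lint_Ioo (r := cc - 1) (t := t) (by linarith) ht0
        have h3 : cc - 1 + 1 = cc := by ring
        rw [h3] at h2
        exact h2
      have hB : ∀ s ∈ Set.Ioo (0:ℝ) t, v s ^ q = φ s := by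
        intro s hs
        rw [hv_def, hφ_def]
        simp only
        rw [ENNReal.mul_rpow_of_nonneg _ _ hq0.le,
          ENNReal.ofReal_rpow_of_pos (Real.rpow_pos_of_pos hs.1 _),
          ← Real.rpow_mul hs.1.le, hαq]
      have hqq' : 1 / q' * q = q - 1 := by
        rw [hq'_def, one_div_div, div_mul_cancel₀ _ hqne]
      calc (∫⁻ s in Set.Ioo 0 t, g s) ^ q
          = (∫⁻ s in Set.Ioo 0 t, (u * v) s) ^ q := by
            rw [setLIntegral_congr_fun measurableSet_Ioo huv]
        _ ≤ ((∫⁻ s in Set.Ioo 0 t, u s ^ q') ^ (1/q') *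
              (∫⁻ s in Set.Ioo 0 t, v s ^ q) ^ (1/q)) ^ q :=
            ENNReal.rpow_le_rpow hholder hq0.le
        _ = ENNReal.ofReal ((t ^ cc / cc) ^ (q - 1)) * ∫⁻ s in Set.Ioo 0 t, φ s := by
            rw [setLIntegral_congr_fun measurableSet_Ioo hB, hA,
              ENNReal.mul_rpow_of_nonneg _ _ hq0.le, ← ENNReal.rpow_mul, ← ENNReal.rpow_mul,
              one_div_mul_cancel hqne, ENNReal.rpow_one, hqq',
              ENNReal.ofReal_rpow_of_pos (by positivity)]
  -- Step 3 : Tonelli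
  set K : ℝ → ℝ≥0∞ := fun t => ∫⁻ s in Set.Ioo 0 t, φ s with hK_def
  have ton : ∫⁻ t in S, ENNReal.ofReal (t ^ e) * K t
      ≤ ∫⁻ s in S, φ s * ENNReal.ofReal (s ^ (-cc) / cc) := by
    have hrw : ∀ t ∈ S, ENNReal.ofReal (t ^ e) * K t
        = ∫⁻ s in S, (Set.Ioo (0:ℝ) t).indicator (fun s' => ENNReal.ofReal (t ^ e) * φ s') s := by
      intro t ht
      rw [lintegral_indicator measurableSet_Ioo, Measure.restrict_restrict measurableSet_Ioo,
        Set.inter_eq_left.mpr (hSdown t ht),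
        lintegral_const_mul' _ _ ENNReal.ofReal_ne_top]
    have hmeas : AEMeasurable (Function.uncurry fun t s =>
        (Set.Ioo (0:ℝ) t).indicator (fun s' => ENNReal.ofReal (t ^ e) * φ s') s)
        ((volume.restrict S).prod (volume.restrict S)) := by
      have heq : (Function.uncurry fun t s =>
          (Set.Ioo (0:ℝ) t).indicator (fun s' => ENNReal.ofReal (t ^ e) * φ s') s)
          = Set.indicator {p : ℝ × ℝ | 0 < p.2 ∧ p.2 < p.1}
              (fun p => ENNReal.ofReal (p.1 ^ e) * φ p.2) := by
        ext ⟨t, s⟩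
        simp only [Function.uncurry, Set.indicator_apply, Set.mem_Ioo, Set.mem_setOf_eq]
      rw [heq]
      refine (Measurable.indicator ?_ ?_).aemeasurable
      · exact (((measurable_rpow_const' e).comp measurable_fst).ennreal_ofReal).mul
          (hφm.comp measurable_snd)
      · exact (measurableSet_lt measurable_const measurable_snd).inter
          (measurableSet_lt measurable_snd measurable_fst)
    calc ∫⁻ t in S, ENNReal.ofReal (t ^ e) * K t
        = ∫⁻ t in S, ∫⁻ s in S,
            (Set.Ioo (0:ℝ) t).indicator (fun s' => ENNReal.ofReal (t ^ e) * φ s') s :=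
          setLIntegral_congr_fun hSmeas hrw
      _ = ∫⁻ s in S, ∫⁻ t in S,
            (Set.Ioo (0:ℝ) t).indicator (fun s' => ENNReal.ofReal (t ^ e) * φ s') s :=
          lintegral_lintegral_swap hmeas
      _ ≤ ∫⁻ s in S, φ s * ENNReal.ofReal (s ^ (-cc) / cc) := by
          refine lintegral_mono_ae ?_
          filter_upwards [ae_restrict_mem hSmeas] with s hs
          have hs0 : 0 < s := hs.1
          have hind : ∀ t : ℝ, (Set.Ioo (0:ℝ) t).indicator
              (fun s' => ENNReal.ofReal (t ^ e) * φ s') s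
              = (Set.Ioi s).indicator (fun t' => ENNReal.ofReal (t' ^ e) * φ s) t := by
            intro t
            by_cases h : s < t
            · rw [Set.indicator_of_mem (Set.mem_Ioo.mpr ⟨hs0, h⟩),
                Set.indicator_of_mem (Set.mem_Ioi.mpr h)]
            · rw [Set.indicator_of_notMem (fun hc => h (Set.mem_Ioo.mp hc).2),
                Set.indicator_of_notMem (fun hc => h (Set.mem_Ioi.mp hc))]
          calc ∫⁻ t in S, (Set.Ioo (0:ℝ) t).indicator
                (fun s' => ENNReal.ofReal (t ^ e) * φ s') s
              = ∫⁻ t in S, (Set.Ioi s).indicator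
                  (fun t' => ENNReal.ofReal (t' ^ e) * φ s) t :=
                lintegral_congr fun t => hind t
            _ = ∫⁻ t in Set.Ioi s ∩ S, ENNReal.ofReal (t ^ e) * φ s := by
                rw [lintegral_indicator measurableSet_Ioi,
                  Measure.restrict_restrict measurableSet_Ioi]
            _ ≤ ∫⁻ t in Set.Ioi s, ENNReal.ofReal (t ^ e) * φ s :=
                lintegral_mono' (Measure.restrict_mono Set.inter_subset_left le_rfl) le_rfl
            _ = (∫⁻ t in Set.Ioi s, ENNReal.ofReal (t ^ e)) * φ s :=
                lintegral_mul_const' _ _ (hφ_ne_top s)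
            _ = φ s * ENNReal.ofReal (s ^ (-cc) / cc) := by
                rw [lint_Ioi (by rw [he_def]; linarith) hs0, mul_comm]
                congr 2 <;> rw [he_def] <;> ring
  -- Step 4 : combine
  have main : (∫⁻ t in S,
      ENNReal.ofReal (t ^ (q * σ) * |(1 / t) * ∫ s in Set.Ioo 0 t, f s| ^ q))
      ≤ ENNReal.ofReal (cc ^ (-q)) *
        ∫⁻ t in S, ENNReal.ofReal (|f t| ^ q * t ^ (q * σ)) := by
    calc ∫⁻ t in S, ENNReal.ofReal (t ^ (q * σ) * |(1 / t) * ∫ s in Set.Ioo 0 t, f s| ^ q)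
        ≤ ∫⁻ t in S, ENNReal.ofReal (t ^ (q * σ - q)) * (∫⁻ s in Set.Ioo 0 t, g s) ^ q :=
          lintegral_mono_ae (by
            filter_upwards [ae_restrict_mem hSmeas] with t ht
            exact step1 t ht)
      _ ≤ ∫⁻ t in S, ENNReal.ofReal (cc ^ (1 - q)) * (ENNReal.ofReal (t ^ e) * K t) := by
          refine lintegral_mono_ae ?_
          filter_upwards [ae_restrict_mem hSmeas] with t ht
          have ht0 : 0 < t := ht.1
          refine le_trans (mul_le_mul_right (key t ht) _) (le_of_eq ?_)
          rw [← mul_assoc, ← ENNReal.ofReal_mul (Real.rpow_nonneg ht0.le _), ← mul_assoc,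
            ← ENNReal.ofReal_mul (Real.rpow_nonneg hc.le _)]
          congr 2
          rw [Real.div_rpow (Real.rpow_nonneg ht0.le _) hc.le, ← Real.rpow_mul ht0.le,
            div_eq_mul_inv, ← Real.rpow_neg hc.le, ← mul_assoc, ← Real.rpow_add ht0]
          have h2 : q * σ - q + cc * (q - 1) = e := by
            rw [he_def, hcc_def]; field_simp; ring
          have h3 : -(q - 1) = 1 - q := by ring
          rw [h2, h3, mul_comm]
      _ = ENNReal.ofReal (cc ^ (1 - q)) * ∫⁻ t in S, ENNReal.ofReal (t ^ e) * K t :=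
          lintegral_const_mul' _ _ ENNReal.ofReal_ne_top
      _ ≤ ENNReal.ofReal (cc ^ (1 - q)) * ∫⁻ s in S, φ s * ENNReal.ofReal (s ^ (-cc) / cc) :=
          mul_le_mul_right ton _
      _ = ENNReal.ofReal (cc ^ (1 - q)) *
            (ENNReal.ofReal cc⁻¹ * ∫⁻ t in S, ENNReal.ofReal (|f t| ^ q * t ^ (q * σ))) := by
          congr 1
          rw [← lintegral_const_mul' _ _ ENNReal.ofReal_ne_top]
          refine setLIntegral_congr_fun hSmeas ?_
          intro s hs
          have hs0 : 0 < s := hs.1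
          have h1 : g s ^ q = ENNReal.ofReal (|f s| ^ q) :=
            ENNReal.ofReal_rpow_of_nonneg (abs_nonneg _) hq0.le
          have hreal : s ^ β * |f s| ^ q * (s ^ (-cc) / cc)
              = cc⁻¹ * (|f s| ^ q * s ^ (q * σ)) := by
            rw [div_eq_mul_inv]
            have h2 : s ^ β * s ^ (-cc) = s ^ (q * σ) := by
              rw [← Real.rpow_add hs0]; congr 1; rw [hβ_def]; ring
            calc s ^ β * |f s| ^ q * (s ^ (-cc) * cc⁻¹)
                = cc⁻¹ * (|f s| ^ q * (s ^ β * s ^ (-cc))) := by ring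
              _ = cc⁻¹ * (|f s| ^ q * s ^ (q * σ)) := by rw [h2]
          rw [hφ_def]
          simp only
          rw [h1, ← ENNReal.ofReal_mul (Real.rpow_nonneg hs0.le _),
            ← ENNReal.ofReal_mul (by positivity), hreal,
            ENNReal.ofReal_mul (by positivity)]
      _ = ENNReal.ofReal (cc ^ (-q)) *
            ∫⁻ t in S, ENNReal.ofReal (|f t| ^ q * t ^ (q * σ)) := by
          rw [← mul_assoc, ← ENNReal.ofReal_mul (Real.rpow_nonneg hc.le _)]
          congr 2
          rw [← Real.rpow_neg_one cc, ← Real.rpow_add hc]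
          congr 1
          ring
  have hfin := ENNReal.rpow_le_rpow main (by positivity : (0:ℝ) ≤ 1 / q)
  rw [ENNReal.mul_rpow_of_nonneg _ _ (by positivity : (0:ℝ) ≤ 1 / q)] at hfin
  have h2 : (ENNReal.ofReal (cc ^ (-q))) ^ (1 / q) = ENNReal.ofReal cc⁻¹ := by
    rw [ENNReal.ofReal_rpow_of_pos (Real.rpow_pos_of_pos hc _), ← Real.rpow_mul hc.le]
    have h3 : -q * (1 / q) = -1 := by field_simp
    rw [h3, Real.rpow_neg_one]
  rwa [h2] at hfin
end

section
/- Let p, q ∈ [1, ∞) and α < q − 1. There exists N = N(q, α) > 0 such that for every function u : ℝ^d × [0,1] → ℝ continuously differentiable up to the boundary and every y ∈ (0,1), ‖u(·,0)‖_{L_p(ℝ^d)} ≤ ‖u(·,y)‖_{L_p(ℝ^d)} + N y^{1 − (1+α)/q} ‖D_y u‖_{L_{p,q}(ℝ^d×(0,y), μ)}, where D_y u denotes the partial derivative of u in the last (vertical) variable. -/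
open MeasureTheory ENNReal

theorem aux_minkowski {X Y : Type*} [MeasurableSpace X] [MeasurableSpace Y]
    (μ : Measure X) (ν : Measure Y) [SigmaFinite μ] [SFinite ν]
    {F : X × Y → ℝ≥0∞} (hF : Measurable F) {p : ℝ} (hp : 1 ≤ p) :
    (∫⁻ x, (∫⁻ s, F (x, s) ∂ν) ^ p ∂μ) ^ (1 / p)
      ≤ ∫⁻ s, (∫⁻ x, F (x, s) ^ p ∂μ) ^ (1 / p) ∂ν := by
  rcases eq_or_lt_of_le hp with hp1 | hp1
  · simp only [← hp1, ENNReal.rpow_one, one_div_one]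
    exact le_of_eq (lintegral_lintegral_swap hF.aemeasurable)
  set R := ∫⁻ s, (∫⁻ x, F (x, s) ^ p ∂μ) ^ (1 / p) ∂ν with hRdef
  by_cases hRtop : R = ∞
  · rw [hRtop]; exact le_top
  have hp0 : (0:ℝ) < p := lt_trans one_pos hp1
  have hq := Real.HolderConjugate.conjExponent hp1
  set p' := Real.conjExponent p with hp'
  have hp'0 : (0:ℝ) < p' := hq.symm.pos
  have hG : Measurable fun x => ∫⁻ s, F (x, s) ∂ν := hF.lintegral_prod_right'
  set G := fun x => ∫⁻ s, F (x, s) ∂ν with hGdef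
  set S := spanningSets μ with hS
  set g : ℕ → X → ℝ≥0∞ := fun n x => min (G x) n with hg
  have hgmeas : ∀ n, Measurable (g n) := fun n => hG.min measurable_const
  set I : ℕ → ℝ≥0∞ := fun n => ∫⁻ x in S n, g n x ^ p ∂μ with hI
  have hgn : ∀ n x, g n x ≤ (n : ℝ≥0∞) := fun n x => min_le_right _ _
  have hgtop : ∀ n x, g n x ≠ ∞ := fun n x =>
    ne_top_of_le_ne_top (natCast_ne_top n) (hgn n x)
  have hItop : ∀ n, I n ≠ ∞ := by
    intro n
    have h1 : I n ≤ (n : ℝ≥0∞) ^ p * μ (S n) := by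
      calc I n ≤ ∫⁻ _ in S n, (n : ℝ≥0∞) ^ p ∂μ :=
            lintegral_mono fun x => ENNReal.rpow_le_rpow (hgn n x) hp0.le
        _ = (n : ℝ≥0∞) ^ p * μ (S n) := setLIntegral_const _ _
    exact ne_top_of_le_ne_top (ENNReal.mul_ne_top
      (ENNReal.rpow_ne_top_of_nonneg hp0.le (natCast_ne_top n))
      (measure_spanningSets_lt_top μ n).ne) h1
  have key : ∀ n, I n ^ (1/p) ≤ R := by
    intro n
    by_cases hI0 : I n = 0
    · rw [hI0, ENNReal.zero_rpow_of_pos (by positivity)]; exact zero_le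
    have hmeas2 : Measurable fun z : X × Y => g n z.1 ^ (p-1) * F z :=
      (((hgmeas n).comp measurable_fst).pow_const _).mul hF
    have step1 : I n ≤ I n ^ (1/p') * R := by
      calc I n = ∫⁻ x in S n, g n x ^ (p-1) * g n x ∂μ := by
            refine lintegral_congr fun x => ?_
            have e1 : g n x ^ p = g n x ^ ((p-1)+1) := by norm_num
            rw [e1, ENNReal.rpow_add_of_nonneg _ _ (by linarith) zero_le_one,
              ENNReal.rpow_one]
        _ ≤ ∫⁻ x in S n, g n x ^ (p-1) * G x ∂μ :=
            lintegral_mono fun x => mul_le_mul_right (min_le_left _ _) _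
        _ = ∫⁻ x in S n, ∫⁻ s, g n x ^ (p-1) * F (x, s) ∂ν ∂μ := by
            refine lintegral_congr fun x => ?_
            rw [lintegral_const_mul' _ _
              (ENNReal.rpow_ne_top_of_nonneg (by linarith) (hgtop n x))]
        _ = ∫⁻ s, ∫⁻ x in S n, g n x ^ (p-1) * F (x, s) ∂μ ∂ν :=
            lintegral_lintegral_swap hmeas2.aemeasurable
        _ ≤ ∫⁻ s, (∫⁻ x in S n, (g n x ^ (p-1)) ^ p' ∂μ) ^ (1/p') *
              (∫⁻ x in S n, F (x, s) ^ p ∂μ) ^ (1/p) ∂ν := by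
            refine lintegral_mono fun s => ?_
            have h := ENNReal.lintegral_mul_le_Lp_mul_Lq (μ.restrict (S n)) hq.symm
              (f := fun x => g n x ^ (p-1)) (g := fun x => F (x, s))
              (((hgmeas n).pow_const (p-1)).aemeasurable)
              ((hF.comp measurable_prodMk_right).aemeasurable)
            simpa using h
        _ = ∫⁻ s, I n ^ (1/p') * (∫⁻ x in S n, F (x, s) ^ p ∂μ) ^ (1/p) ∂ν := by
            have h2 : ∫⁻ x in S n, (g n x ^ (p-1)) ^ p' ∂μ = I n := by
              refine lintegral_congr fun x => ?_
              rw [← ENNReal.rpow_mul, hq.sub_one_mul_conj]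
            rw [h2]
        _ = I n ^ (1/p') * ∫⁻ s, (∫⁻ x in S n, F (x, s) ^ p ∂μ) ^ (1/p) ∂ν :=
            lintegral_const_mul' _ _
              (ENNReal.rpow_ne_top_of_nonneg (by positivity) (hItop n))
        _ ≤ I n ^ (1/p') * R := by
            refine mul_le_mul_right (lintegral_mono fun s => ?_) _
            exact ENNReal.rpow_le_rpow
              (lintegral_mono' Measure.restrict_le_self le_rfl) (by positivity)
    have hIfac : I n = I n ^ (1/p) * I n ^ (1/p') := by
      rw [← ENNReal.rpow_add _ _ hI0 (hItop n)]
      rw [one_div, one_div, hq.inv_add_inv_eq_one, ENNReal.rpow_one]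
    have step2 : I n ^ (1/p) * I n ^ (1/p') ≤ R * I n ^ (1/p') := by
      calc I n ^ (1/p) * I n ^ (1/p') = I n := hIfac.symm
        _ ≤ I n ^ (1/p') * R := step1
        _ = R * I n ^ (1/p') := mul_comm _ _
    exact (ENNReal.mul_le_mul_iff_left
      ((ENNReal.rpow_pos (pos_iff_ne_zero.mpr hI0) (hItop n)).ne')
      (ENNReal.rpow_ne_top_of_nonneg (by positivity) (hItop n))).mp step2
  have hind : ∀ n, Measurable fun x => (S n).indicator (fun x => g n x ^ p) x :=
    fun n => ((hgmeas n).pow_const p).indicator (measurableSet_spanningSets μ n)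
  have hmono : Monotone fun n => fun x => (S n).indicator (fun x => g n x ^ p) x := by
    intro a b hab x
    dsimp only
    by_cases hx : x ∈ S a
    · rw [Set.indicator_of_mem hx, Set.indicator_of_mem (monotone_spanningSets μ hab hx)]
      exact ENNReal.rpow_le_rpow (min_le_min le_rfl (Nat.cast_le.2 hab)) hp0.le
    · rw [Set.indicator_of_notMem hx]; exact zero_le
  have hsup : ∀ x, ⨆ n, (S n).indicator (fun x => g n x ^ p) x = G x ^ p := by
    intro x
    refine le_antisymm (iSup_le fun n => ?_) ?_
    · by_cases hx : x ∈ S n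
      · rw [Set.indicator_of_mem hx]
        exact ENNReal.rpow_le_rpow (min_le_left _ _) hp0.le
      · rw [Set.indicator_of_notMem hx]; exact zero_le
    · have hxm : x ∈ ⋃ n, S n := by rw [hS, iUnion_spanningSets]; trivial
      obtain ⟨m, hm⟩ := Set.mem_iUnion.mp hxm
      rcases eq_or_ne (G x) ∞ with hGx | hGx
      · rw [hGx, ENNReal.top_rpow_of_pos hp0]
        have hk : ∀ k : ℕ, (k:ℝ≥0∞) ≤ ⨆ n, (S n).indicator (fun x => g n x ^ p) x := by
          intro k
          have hxn : x ∈ S (max m (max k 1)) :=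
            monotone_spanningSets μ (le_max_left _ _) hm
          refine le_trans ?_ (le_iSup _ (max m (max k 1)))
          rw [Set.indicator_of_mem hxn]
          have h1 : g (max m (max k 1)) x = ((max m (max k 1) : ℕ) : ℝ≥0∞) := by
            rw [hg]; simp [hGx]
          rw [h1]
          have hone : (1:ℝ≥0∞) ≤ ((max m (max k 1) : ℕ) : ℝ≥0∞) := by
            exact_mod_cast Nat.one_le_cast.2 (le_max_of_le_right (le_max_right k 1))
          have hkle : (k:ℝ≥0∞) ≤ ((max m (max k 1) : ℕ) : ℝ≥0∞) :=
            Nat.cast_le.2 (le_max_of_le_right (le_max_left _ _))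
          calc (k:ℝ≥0∞) ≤ ((max m (max k 1) : ℕ) : ℝ≥0∞) := hkle
            _ = ((max m (max k 1) : ℕ) : ℝ≥0∞) ^ (1:ℝ) := (ENNReal.rpow_one _).symm
            _ ≤ ((max m (max k 1) : ℕ) : ℝ≥0∞) ^ p :=
                ENNReal.rpow_le_rpow_of_exponent_le hone hp
        calc (⊤:ℝ≥0∞) = ⨆ k:ℕ, (k:ℝ≥0∞) := ENNReal.iSup_natCast.symm
          _ ≤ _ := iSup_le hk
      · obtain ⟨k, hk⟩ := ENNReal.exists_nat_gt hGx
        have hxn : x ∈ S (max m k) := monotone_spanningSets μ (le_max_left _ _) hm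
        refine le_trans ?_ (le_iSup _ (max m k))
        rw [Set.indicator_of_mem hxn]
        have h1 : g (max m k) x = G x :=
          min_eq_left (le_trans hk.le (Nat.cast_le.2 (le_max_right _ _)))
        rw [h1]
  have hfin : ∫⁻ x, G x ^ p ∂μ = ⨆ n, I n := by
    calc ∫⁻ x, G x ^ p ∂μ
        = ∫⁻ x, ⨆ n, (S n).indicator (fun x => g n x ^ p) x ∂μ :=
          lintegral_congr fun x => (hsup x).symm
      _ = ⨆ n, ∫⁻ x, (S n).indicator (fun x => g n x ^ p) x ∂μ :=
          lintegral_iSup hind hmono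
      _ = ⨆ n, I n := by
          refine iSup_congr fun n => ?_
          rw [lintegral_indicator (measurableSet_spanningSets μ n)]
  calc (∫⁻ x, G x ^ p ∂μ) ^ (1/p) = (⨆ n, I n) ^ (1/p) := by rw [hfin]
    _ ≤ (R ^ p) ^ (1/p) := by
        refine ENNReal.rpow_le_rpow (iSup_le fun n => ?_) (by positivity)
        calc I n = (I n ^ (1/p)) ^ p := by
              rw [← ENNReal.rpow_mul, one_div, inv_mul_cancel₀ hp0.ne', ENNReal.rpow_one]
          _ ≤ R ^ p := ENNReal.rpow_le_rpow (key n) hp0.le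
    _ = R := by
        rw [← ENNReal.rpow_mul, mul_one_div, div_self hp0.ne', ENNReal.rpow_one]


theorem aux_holder_q1 {α y : ℝ} (hα : α < 0) (hy : y ∈ Set.Ioo (0:ℝ) 1)
    (w : ℝ → ℝ≥0∞) :
    ∫⁻ s in Set.Ioo 0 y, w s ≤
      ENNReal.ofReal (y ^ (-α)) * ∫⁻ s in Set.Ioo 0 y, w s * ENNReal.ofReal (s ^ α) := by
  have h0y : 0 < y := hy.1
  calc ∫⁻ s in Set.Ioo 0 y, w s
      ≤ ∫⁻ s in Set.Ioo 0 y, ENNReal.ofReal (y ^ (-α)) * (w s * ENNReal.ofReal (s ^ α)) := by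
        refine lintegral_mono_ae ?_
        filter_upwards [ae_restrict_mem measurableSet_Ioo] with s hs
        have h1 : w s = w s * ENNReal.ofReal (s ^ α) * ENNReal.ofReal (s ^ (-α)) := by
          rw [mul_assoc, ← ENNReal.ofReal_mul (Real.rpow_nonneg hs.1.le _),
            ← Real.rpow_add hs.1]
          norm_num
        refine le_trans (le_of_eq h1) ?_
        rw [mul_comm (ENNReal.ofReal (y ^ (-α)))]
        exact mul_le_mul_right (ENNReal.ofReal_le_ofReal
          (Real.rpow_le_rpow hs.1.le hs.2.le (by linarith))) _
    _ = ENNReal.ofReal (y ^ (-α)) * ∫⁻ s in Set.Ioo 0 y, w s * ENNReal.ofReal (s ^ α) :=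
        lintegral_const_mul' _ _ ENNReal.ofReal_ne_top

theorem aux_holder {q α y : ℝ} (hq1 : 1 < q) (hα : α < q - 1) (hy : y ∈ Set.Ioo (0:ℝ) 1)
    {w : ℝ → ℝ≥0∞} (hw : Measurable w) :
    ∫⁻ s in Set.Ioo 0 y, w s ≤
      ENNReal.ofReal (((q-1)/(q-1-α)) ^ ((q-1)/q) * y ^ (1-(1+α)/q)) *
        (∫⁻ s in Set.Ioo 0 y, w s ^ q * ENNReal.ofReal (s ^ α)) ^ (1/q) := by
  have h0y : 0 < y := hy.1
  have hq0 : (0:ℝ) < q := by linarith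
  have hq10 : (0:ℝ) < q - 1 := by linarith
  have hq1α : (0:ℝ) < q - 1 - α := by linarith
  have hc : q.HolderConjugate (Real.conjExponent q) := Real.HolderConjugate.conjExponent hq1
  set q' := Real.conjExponent q with hq'def
  have hq'0 : (0:ℝ) < q' := hc.symm.pos
  set r : ℝ := -α/(q-1) with hrdef
  have hr : -1 < r := by
    rw [hrdef, lt_div_iff₀ hq10]; linarith
  have hr1pos : (0:ℝ) < r + 1 := by linarith
  have hmw : Measurable fun s => w s * ENNReal.ofReal (s ^ (α/q)) :=
    hw.mul ((measurable_id.pow_const (α/q)).ennreal_ofReal)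
  have hmg : Measurable fun s : ℝ => ENNReal.ofReal (s ^ (-(α/q))) :=
    (measurable_id.pow_const (-(α/q))).ennreal_ofReal
  calc ∫⁻ s in Set.Ioo 0 y, w s
      = ∫⁻ s in Set.Ioo 0 y,
          (w s * ENNReal.ofReal (s ^ (α/q))) * ENNReal.ofReal (s ^ (-(α/q))) := by
        refine setLIntegral_congr_fun measurableSet_Ioo (fun s hs => ?_)
        rw [mul_assoc, ← ENNReal.ofReal_mul (Real.rpow_nonneg hs.1.le _),
          ← Real.rpow_add hs.1]
        norm_num
    _ ≤ (∫⁻ s in Set.Ioo 0 y, (w s * ENNReal.ofReal (s ^ (α/q))) ^ q) ^ (1/q) *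
        (∫⁻ s in Set.Ioo 0 y, ENNReal.ofReal (s ^ (-(α/q))) ^ q') ^ (1/q') := by
        have h := ENNReal.lintegral_mul_le_Lp_mul_Lq (volume.restrict (Set.Ioo 0 y)) hc
          (f := fun s => w s * ENNReal.ofReal (s ^ (α/q)))
          (g := fun s => ENNReal.ofReal (s ^ (-(α/q))))
          hmw.aemeasurable hmg.aemeasurable
        simpa using h
    _ = (∫⁻ s in Set.Ioo 0 y, w s ^ q * ENNReal.ofReal (s ^ α)) ^ (1/q) *
        (∫⁻ s in Set.Ioo 0 y, ENNReal.ofReal (s ^ r)) ^ (1/q') := by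
        congr 2
        · refine setLIntegral_congr_fun measurableSet_Ioo (fun s hs => ?_)
          rw [ENNReal.mul_rpow_of_nonneg _ _ hq0.le,
            ENNReal.ofReal_rpow_of_nonneg (Real.rpow_nonneg hs.1.le _) hq0.le,
            ← Real.rpow_mul hs.1.le, div_mul_cancel₀ _ hq0.ne']
        · refine setLIntegral_congr_fun measurableSet_Ioo (fun s hs => ?_)
          have e2 : -(α/q) * q' = r := by
            rw [hq'def, Real.conjExponent, hrdef]
            field_simp
          rw [ENNReal.ofReal_rpow_of_nonneg (Real.rpow_nonneg hs.1.le _) hq'0.le,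
            ← Real.rpow_mul hs.1.le, e2]
    _ ≤ ENNReal.ofReal (((q-1)/(q-1-α)) ^ ((q-1)/q) * y ^ (1-(1+α)/q)) *
        (∫⁻ s in Set.Ioo 0 y, w s ^ q * ENNReal.ofReal (s ^ α)) ^ (1/q) := by
        rw [mul_comm]
        gcongr
        -- compute second factor
        have hK : ∫⁻ s in Set.Ioo 0 y, ENNReal.ofReal (s ^ r) =
            ENNReal.ofReal (y ^ (r+1) / (r+1)) := by
          rw [setLIntegral_congr Ioo_ae_eq_Ioc]
          have hint : IntegrableOn (fun s : ℝ => s ^ r) (Set.Ioc 0 y) :=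
            (intervalIntegrable_iff_integrableOn_Ioc_of_le h0y.le).mp
              (intervalIntegral.intervalIntegrable_rpow' hr)
          have hnn : 0 ≤ᵐ[volume.restrict (Set.Ioc 0 y)] fun s : ℝ => s ^ r := by
            filter_upwards [ae_restrict_mem measurableSet_Ioc] with s hs
            exact Real.rpow_nonneg hs.1.le _
          rw [← ofReal_integral_eq_lintegral_ofReal hint hnn]
          congr 1
          have := integral_rpow (a := 0) (b := y) (Or.inl hr)
          rw [← intervalIntegral.integral_of_le h0y.le, this,
            Real.zero_rpow (by linarith : r + 1 ≠ 0)]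
          ring
        rw [hK, ENNReal.ofReal_rpow_of_nonneg
          (div_nonneg (Real.rpow_nonneg h0y.le _) hr1pos.le) (by positivity)]
        refine le_of_eq (congrArg ENNReal.ofReal ?_)
        have e1 : (1:ℝ)/q' = (q-1)/q := by
          rw [hq'def, Real.conjExponent, one_div_div]
        have hr1 : r + 1 = (q-1-α)/(q-1) := by
          rw [hrdef]; field_simp; ring
        have ey : (q - 1 - α) / (q - 1) * ((q - 1) / q) = 1 - (1+α)/q := by
          field_simp; ring
        rw [e1, Real.div_rpow (Real.rpow_nonneg h0y.le _) hr1pos.le,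
          ← Real.rpow_mul h0y.le, hr1, ey, div_eq_mul_inv, mul_comm]
        congr 1
        rw [← Real.inv_rpow (by positivity), inv_div]

noncomputable def auxN (q α : ℝ) : ℝ :=
  if q = 1 then 1 else ((q-1)/(q-1-α)) ^ ((q-1)/q)

theorem auxN_pos {q α : ℝ} (hq : 1 ≤ q) (hα : α < q - 1) : 0 < auxN q α := by
  rw [auxN]
  split_ifs with h
  · exact one_pos
  · have hq1 : 1 < q := lt_of_le_of_ne hq (Ne.symm h)
    exact Real.rpow_pos_of_pos (div_pos (by linarith) (by linarith)) _

theorem aux_holder_all {q α : ℝ} (hq : 1 ≤ q) (hα : α < q - 1) {y : ℝ}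
    (hy : y ∈ Set.Ioo (0:ℝ) 1) {w : ℝ → ℝ≥0∞} (hw : Measurable w) :
    ∫⁻ s in Set.Ioo 0 y, w s ≤
      ENNReal.ofReal (auxN q α * y ^ (1-(1+α)/q)) *
        (∫⁻ s in Set.Ioo 0 y, w s ^ q * ENNReal.ofReal (s ^ α)) ^ (1/q) := by
  rcases eq_or_lt_of_le hq with hq1 | hq1
  · subst hq1
    have e : auxN 1 α = 1 := by simp [auxN]
    have e2 : (1:ℝ) - (1+α)/1 = -α := by ring
    rw [e, one_mul, e2]
    simp only [ENNReal.rpow_one, one_div_one]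
    exact aux_holder_q1 (by linarith) hy w
  · have e : auxN q α = ((q-1)/(q-1-α)) ^ ((q-1)/q) := by
      unfold auxN
      rw [if_neg (show ¬ q = 1 from ne_of_gt hq1)]
    rw [e]
    exact aux_holder hq1 hα hy hw

/-- Pointwise-in-`y` trace estimate: for `u` continuously differentiable up to the boundary
on `ℝ^d × [0,1]` and `y ∈ (0,1)`, the `L_p` norm of `u(·,0)` is bounded by the `L_p` norm
of `u(·,y)` plus `N y^{1-(1+α)/q}` times the weighted mixed norm of the vertical derivative
`D_y u` on `ℝ^d × (0,y)`.  The constant `N` depends only on `q` and `α`. -/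
theorem trace_pointwise_estimate (q α : ℝ) (hq : 1 ≤ q) (hα : α < q - 1) :
    ∃ N : ℝ, 0 < N ∧ ∀ (d : ℕ) (p : ℝ), 1 ≤ p →
      ∀ u : EuclideanSpace ℝ (Fin d) × ℝ → ℝ,
        ContDiffOn ℝ 1 u (Set.univ ×ˢ Set.Icc 0 1) →
        ∀ y : ℝ, y ∈ Set.Ioo (0 : ℝ) 1 →
        (∫⁻ x, ENNReal.ofReal (|u (x, 0)| ^ p)) ^ (1 / p)
          ≤ (∫⁻ x, ENNReal.ofReal (|u (x, y)| ^ p)) ^ (1 / p)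
            + ENNReal.ofReal (N * y ^ (1 - (1 + α) / q)) *
              (∫⁻ s in Set.Ioo (0 : ℝ) y,
                (∫⁻ x, ENNReal.ofReal (|deriv (fun t => u (x, t)) s| ^ p)) ^ (q / p) *
                  ENNReal.ofReal (s ^ α)) ^ (1 / q) := by
  refine ⟨auxN q α, auxN_pos hq hα, ?_⟩
  intro d p hp u hu y hy
  have hp0 : (0:ℝ) < p := lt_of_lt_of_le one_pos hp
  have h0y : (0:ℝ) < y := hy.1
  have hy1 : y < 1 := hy.2
  have hUopen : IsOpen ((Set.univ : Set (EuclideanSpace ℝ (Fin d))) ×ˢ Set.Ioo (0:ℝ) 1) :=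
    isOpen_univ.prod isOpen_Ioo
  have huU : ContDiffOn ℝ 1 u (Set.univ ×ˢ Set.Ioo (0:ℝ) 1) :=
    hu.mono (Set.prod_mono le_rfl Set.Ioo_subset_Icc_self)
  have hdiff : ∀ (x : EuclideanSpace ℝ (Fin d)) (s : ℝ), s ∈ Set.Ioo (0:ℝ) 1 →
      HasDerivAt (fun t => u (x, t)) (fderiv ℝ u (x, s) (0, 1)) s := by
    intro x s hs
    have h1 : ContDiffAt ℝ 1 u (x, s) :=
      huU.contDiffAt (hUopen.mem_nhds ⟨trivial, hs⟩)
    have h2 : HasFDerivAt u (fderiv ℝ u (x, s)) (x, s) :=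
      (h1.differentiableAt one_ne_zero).hasFDerivAt
    have h3 : HasDerivAt (fun t : ℝ => ((x, t) : EuclideanSpace ℝ (Fin d) × ℝ))
        ((0 : EuclideanSpace ℝ (Fin d)), (1:ℝ)) s :=
      (hasDerivAt_const s x).prodMk (hasDerivAt_id s)
    exact h2.comp_hasDerivAt s h3
  set D : EuclideanSpace ℝ (Fin d) × ℝ → ℝ := fun z => fderiv ℝ u z (0, 1) with hDdef
  have hDmeas : Measurable D := measurable_fderiv_apply_const ℝ u (0, 1)
  set F0 : EuclideanSpace ℝ (Fin d) × ℝ → ℝ≥0∞ := fun z => ENNReal.ofReal ‖D z‖ with hF0def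
  have hF0meas : Measurable F0 := hDmeas.norm.ennreal_ofReal
  have hderiv_eq : ∀ (x : EuclideanSpace ℝ (Fin d)), ∀ s ∈ Set.Ioo (0:ℝ) y,
      deriv (fun t => u (x, t)) s = D (x, s) := fun x s hs =>
    (hdiff x s ⟨hs.1, hs.2.trans hy1⟩).deriv
  have key : ∀ x : EuclideanSpace ℝ (Fin d),
      ENNReal.ofReal |u (x, 0)| ≤ ENNReal.ofReal |u (x, y)| +
        ∫⁻ s in Set.Ioo 0 y, F0 (x, s) := by
    intro x
    set g : ℝ → ℝ := fun t => u (x, t) with hgdef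
    have hgC : ContDiffOn ℝ 1 g (Set.Icc 0 1) := by
      have hmap : Set.MapsTo (fun t : ℝ => ((x, t) : EuclideanSpace ℝ (Fin d) × ℝ))
          (Set.Icc 0 1) (Set.univ ×ˢ Set.Icc (0:ℝ) 1) := fun t ht => ⟨trivial, ht⟩
      exact hu.comp ((contDiff_const.prodMk contDiff_id).contDiffOn) hmap
    have hgc : ContinuousOn g (Set.Icc 0 y) :=
      hgC.continuousOn.mono (Set.Icc_subset_Icc le_rfl hy1.le)
    have hder : ∀ s ∈ Set.Ioo 0 y, HasDerivAt g (D (x, s)) s := fun s hs =>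
      hdiff x s ⟨hs.1, hs.2.trans hy1⟩
    have hDW : ContinuousOn (derivWithin g (Set.Icc 0 1)) (Set.Icc 0 1) :=
      hgC.continuousOn_derivWithin (uniqueDiffOn_Icc one_pos) le_rfl
    have hEq : Set.EqOn (derivWithin g (Set.Icc 0 1)) (deriv g) (Set.Ioc 0 y) :=
      fun s hs => derivWithin_of_mem_nhds (Icc_mem_nhds hs.1 (lt_of_le_of_lt hs.2 hy1))
    have hint0 : IntervalIntegrable (derivWithin g (Set.Icc 0 1)) volume 0 y := by
      apply ContinuousOn.intervalIntegrable
      rw [Set.uIcc_of_le h0y.le]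
      exact hDW.mono (Set.Icc_subset_Icc le_rfl hy1.le)
    have hint : IntervalIntegrable (deriv g) volume 0 y := by
      rw [intervalIntegrable_iff_integrableOn_Ioc_of_le h0y.le]
      exact ((intervalIntegrable_iff_integrableOn_Ioc_of_le h0y.le).mp hint0).congr_fun
        hEq measurableSet_Ioc
    have hftc : ∫ s in (0:ℝ)..y, deriv g s = g y - g 0 := by
      refine intervalIntegral.integral_eq_sub_of_hasDeriv_right_of_le h0y.le hgc
        (fun s hs => ?_) hint
      rw [(hder s hs).deriv]
      exact (hder s hs).hasDerivWithinAt
    have habs : |u (x, 0)| ≤ |u (x, y)| + ∫ s in (0:ℝ)..y, |deriv g s| := by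
      have h1 : |g 0| ≤ |g y| + |g y - g 0| := by
        calc |g 0| = |g y - (g y - g 0)| := by rw [_root_.sub_sub_cancel]
          _ ≤ |g y| + |g y - g 0| := abs_sub _ _
      have h2 : |g y - g 0| ≤ ∫ s in (0:ℝ)..y, |deriv g s| := by
        rw [← hftc]
        exact intervalIntegral.abs_integral_le_integral_abs h0y.le
      calc |u (x, 0)| = |g 0| := rfl
        _ ≤ |g y| + |g y - g 0| := h1
        _ ≤ |u (x, y)| + ∫ s in (0:ℝ)..y, |deriv g s| := add_le_add le_rfl h2
    have hnn : 0 ≤ ∫ s in (0:ℝ)..y, |deriv g s| :=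
      intervalIntegral.integral_nonneg h0y.le (fun s _ => abs_nonneg _)
    calc ENNReal.ofReal |u (x, 0)|
        ≤ ENNReal.ofReal (|u (x, y)| + ∫ s in (0:ℝ)..y, |deriv g s|) :=
          ENNReal.ofReal_le_ofReal habs
      _ = ENNReal.ofReal |u (x, y)| + ENNReal.ofReal (∫ s in (0:ℝ)..y, |deriv g s|) :=
          ENNReal.ofReal_add (abs_nonneg _) hnn
      _ = ENNReal.ofReal |u (x, y)| + ∫⁻ s in Set.Ioo 0 y, F0 (x, s) := by
          congr 1
          have hia : IntegrableOn (fun s => |deriv g s|) (Set.Ioc 0 y) :=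
            (intervalIntegrable_iff_integrableOn_Ioc_of_le h0y.le).mp hint.abs
          have hnn' : 0 ≤ᵐ[volume.restrict (Set.Ioc 0 y)] fun s => |deriv g s| :=
            ae_of_all _ fun s => abs_nonneg _
          rw [intervalIntegral.integral_of_le h0y.le,
            ofReal_integral_eq_lintegral_ofReal hia hnn',
            ← setLIntegral_congr (Ioo_ae_eq_Ioc (a := (0:ℝ)) (b := y))]
          refine setLIntegral_congr_fun measurableSet_Ioo (fun s hs => ?_)
          rw [hgdef, hderiv_eq x s hs]
          simp [hF0def, Real.norm_eq_abs]
  have hcy : Continuous fun x : EuclideanSpace ℝ (Fin d) => u (x, y) :=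
    hu.continuousOn.comp_continuous (continuous_id.prodMk continuous_const)
      (fun x => ⟨trivial, ⟨h0y.le, hy1.le⟩⟩)
  have hmy : Measurable fun x : EuclideanSpace ℝ (Fin d) => ENNReal.ofReal |u (x, y)| :=
    hcy.abs.measurable.ennreal_ofReal
  have hGmeas : Measurable fun x : EuclideanSpace ℝ (Fin d) =>
      ∫⁻ s in Set.Ioo 0 y, F0 (x, s) := hF0meas.lintegral_prod_right'
  have hwmeas : Measurable fun s : ℝ => (∫⁻ x, F0 (x, s) ^ p) ^ (1/p) :=
    ((hF0meas.pow_const p).lintegral_prod_left').pow_const _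
  calc (∫⁻ x, ENNReal.ofReal (|u (x, 0)| ^ p)) ^ (1/p)
      = (∫⁻ x, ENNReal.ofReal |u (x, 0)| ^ p) ^ (1/p) := by
        simp_rw [ENNReal.ofReal_rpow_of_nonneg (abs_nonneg _) hp0.le]
    _ ≤ (∫⁻ x, (ENNReal.ofReal |u (x, y)| + ∫⁻ s in Set.Ioo 0 y, F0 (x, s)) ^ p) ^ (1/p) := by
        refine ENNReal.rpow_le_rpow (lintegral_mono fun x => ?_) (by positivity)
        exact ENNReal.rpow_le_rpow (key x) hp0.le
    _ ≤ (∫⁻ x, ENNReal.ofReal |u (x, y)| ^ p) ^ (1/p) +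
        (∫⁻ x, (∫⁻ s in Set.Ioo 0 y, F0 (x, s)) ^ p) ^ (1/p) :=
        ENNReal.lintegral_Lp_add_le hmy.aemeasurable hGmeas.aemeasurable hp
    _ ≤ (∫⁻ x, ENNReal.ofReal |u (x, y)| ^ p) ^ (1/p) +
        ∫⁻ s in Set.Ioo 0 y, (∫⁻ x, F0 (x, s) ^ p) ^ (1/p) :=
        add_le_add le_rfl
          (aux_minkowski volume (volume.restrict (Set.Ioo 0 y)) hF0meas hp)
    _ ≤ (∫⁻ x, ENNReal.ofReal |u (x, y)| ^ p) ^ (1/p) +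
        ENNReal.ofReal (auxN q α * y ^ (1-(1+α)/q)) *
          (∫⁻ s in Set.Ioo 0 y, ((∫⁻ x, F0 (x, s) ^ p) ^ (1/p)) ^ q *
            ENNReal.ofReal (s ^ α)) ^ (1/q) :=
        add_le_add le_rfl (aux_holder_all hq hα hy hwmeas)
    _ = (∫⁻ x, ENNReal.ofReal (|u (x, y)| ^ p)) ^ (1/p) +
        ENNReal.ofReal (auxN q α * y ^ (1-(1+α)/q)) *
          (∫⁻ s in Set.Ioo (0:ℝ) y,
            (∫⁻ x, ENNReal.ofReal (|deriv (fun t => u (x, t)) s| ^ p)) ^ (q/p) *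
              ENNReal.ofReal (s ^ α)) ^ (1/q) := by
        congr 1
        · simp_rw [ENNReal.ofReal_rpow_of_nonneg (abs_nonneg _) hp0.le]
        congr 1
        refine congrArg (· ^ (1/q)) ?_
        refine setLIntegral_congr_fun measurableSet_Ioo (fun s hs => ?_)
        congr 1
        rw [← ENNReal.rpow_mul]
        have e3 : 1/p*q = q/p := by ring
        rw [e3]
        refine congrArg (· ^ (q/p)) ?_
        refine lintegral_congr fun x => ?_
        have e4 : F0 (x, s) = ENNReal.ofReal |deriv (fun t => u (x, t)) s| := by
          rw [hderiv_eq x s hs]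
          simp [hF0def, Real.norm_eq_abs]
        rw [e4, ENNReal.ofReal_rpow_of_nonneg (abs_nonneg _) hp0.le]
end

section
/- Let p, q ∈ [1, ∞) and α < q − 1. There exists N = N(q, α) > 0 such that for every function u : ℝ^d × [0,1] → ℝ continuously differentiable up to the boundary and every y ∈ (0,1), ‖u(·,y)‖_{L_p(ℝ^d)} ≤ N y^{−(1+α)/q} ( ‖u‖_{L_{p,q}(ℝ^d×(0,y), μ)} + y ‖D_y u‖_{L_{p,q}(ℝ^d×(0,y), μ)} ), where D_y u denotes the partial derivative of u in the last (vertical) variable. -/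
open MeasureTheory ENNReal


lemma mink_fin {X : Type*} [MeasurableSpace X] (μ : Measure X) (ν : Measure ℝ)
    [SFinite μ] [SFinite ν]
    (f : X × ℝ → ℝ≥0∞) (hf : Measurable f) (p : ℝ) (hp : 1 ≤ p)
    (hfin : ∫⁻ x, (∫⁻ t, f (x, t) ∂ν) ^ p ∂μ ≠ ∞) :
    (∫⁻ x, (∫⁻ t, f (x, t) ∂ν) ^ p ∂μ) ^ (1 / p)
      ≤ ∫⁻ t, (∫⁻ x, f (x, t) ^ p ∂μ) ^ (1 / p) ∂ν := by
  have hp0 : (0:ℝ) < p := lt_of_lt_of_le one_pos hp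
  set V : X → ℝ≥0∞ := fun x => ∫⁻ t, f (x, t) ∂ν with hV
  have hVmeas : Measurable V := hf.lintegral_prod_right'
  rcases eq_or_lt_of_le hp with hp1 | hp1
  · -- p = 1 : Tonelli
    subst hp1
    simp only [ENNReal.rpow_one, one_div_one]
    exact le_of_eq (lintegral_lintegral_swap (μ := μ) (ν := ν) (f := fun x t => f (x, t)) hf.aemeasurable)
  · -- p > 1
    set A := ∫⁻ x, V x ^ p ∂μ with hA
    rcases eq_or_ne A 0 with hA0 | hA0
    · rw [hA0, ENNReal.zero_rpow_of_pos (by positivity)]; exact zero_le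
    have hpq : p.HolderConjugate (p / (p - 1)) := Real.HolderConjugate.conjExponent hp1
    set q := p / (p - 1) with hq
    set g : X → ℝ≥0∞ := fun x => V x ^ (p - 1) with hg
    have hgmeas : Measurable g := hVmeas.pow_const _
    have key : A ≤ (∫⁻ t, (∫⁻ x, f (x, t) ^ p ∂μ) ^ (1 / p) ∂ν) * A ^ (1 / q) := by
      have h1 : A = ∫⁻ x, V x * g x ∂μ := by
        apply lintegral_congr; intro x
        rw [hg, ← ENNReal.rpow_one (V x), ← ENNReal.rpow_add_of_nonneg _ _ zero_le_one (by linarith)]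
        norm_num
      have h2 : ∀ x, V x * g x = ∫⁻ t, f (x, t) * g x ∂ν := by
        intro x; rw [hV]; exact (lintegral_mul_const'' _ (hf.comp measurable_prodMk_left).aemeasurable).symm
      have h3 : A = ∫⁻ t, ∫⁻ x, f (x, t) * g x ∂μ ∂ν := by
        rw [h1]
        simp_rw [h2]
        exact lintegral_lintegral_swap (f := fun x t => f (x, t) * g x)
          ((hf.mul (hgmeas.comp measurable_fst)).aemeasurable)
      have h4 : ∀ t, (∫⁻ x, f (x, t) * g x ∂μ)
          ≤ (∫⁻ x, f (x, t) ^ p ∂μ) ^ (1 / p) * (∫⁻ x, g x ^ q ∂μ) ^ (1 / q) := fun t =>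
        ENNReal.lintegral_mul_le_Lp_mul_Lq μ hpq (hf.comp measurable_prodMk_right).aemeasurable
          hgmeas.aemeasurable
      have h5 : (∫⁻ x, g x ^ q ∂μ) = A := by
        apply lintegral_congr; intro x
        rw [hg, ← ENNReal.rpow_mul]
        congr 1
        have h : p - 1 ≠ 0 := by linarith
        rw [hq]
        field_simp
      calc A = ∫⁻ t, ∫⁻ x, f (x, t) * g x ∂μ ∂ν := h3
        _ ≤ ∫⁻ t, (∫⁻ x, f (x, t) ^ p ∂μ) ^ (1 / p) * A ^ (1 / q) ∂ν := by
            refine lintegral_mono fun t => ?_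
            rw [← h5]; exact h4 t
        _ = (∫⁻ t, (∫⁻ x, f (x, t) ^ p ∂μ) ^ (1 / p) ∂ν) * A ^ (1 / q) :=
            lintegral_mul_const'' _
              ((hf.pow_const _).lintegral_prod_left'.pow_const _).aemeasurable
    -- cancel A^(1/q)
    have hAq_ne0 : A ^ (1 / q) ≠ 0 := by
      rw [← ENNReal.zero_rpow_of_pos hpq.symm.one_div_pos]
      intro h
      exact hA0 (ENNReal.rpow_left_injective hpq.symm.one_div_pos.ne' h)
    have hAq_netop : A ^ (1 / q) ≠ ∞ := by
      exact ENNReal.rpow_ne_top_of_nonneg hpq.symm.one_div_pos.le hfin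
    have : A ^ (1 / p) * A ^ (1 / q) ≤
        (∫⁻ t, (∫⁻ x, f (x, t) ^ p ∂μ) ^ (1 / p) ∂ν) * A ^ (1 / q) := by
      rw [← ENNReal.rpow_add_of_nonneg _ _ hpq.one_div_nonneg hpq.symm.one_div_nonneg]
      rw [show (1:ℝ)/p + 1/q = p⁻¹ + q⁻¹ by rw [one_div, one_div], hpq.inv_add_inv_eq_one,
        ENNReal.rpow_one]
      exact key
    exact (ENNReal.mul_le_mul_iff_left hAq_ne0 hAq_netop).mp this

lemma mink_euclid (d : ℕ) (ν : Measure ℝ) [IsFiniteMeasure ν]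
    (f : EuclideanSpace ℝ (Fin d) × ℝ → ℝ≥0∞) (hf : Measurable f) (p : ℝ) (hp : 1 ≤ p)
    (hbd : ∀ n : ℕ, ∃ C : ℝ≥0∞, C ≠ ∞ ∧
      ∀ x ∈ Metric.closedBall (0 : EuclideanSpace ℝ (Fin d)) n, ∀ᵐ t ∂ν, f (x, t) ≤ C) :
    (∫⁻ x, (∫⁻ t, f (x, t) ∂ν) ^ p) ^ (1 / p)
      ≤ ∫⁻ t, (∫⁻ x, f (x, t) ^ p) ^ (1 / p) ∂ν := by
  have hp0 : (0:ℝ) < p := lt_of_lt_of_le one_pos hp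
  set R := ∫⁻ t, (∫⁻ x, f (x, t) ^ p) ^ (1 / p) ∂ν with hR
  set V : EuclideanSpace ℝ (Fin d) → ℝ≥0∞ := fun x => ∫⁻ t, f (x, t) ∂ν with hV
  have hVmeas : Measurable V := hf.lintegral_prod_right'
  set Vp : EuclideanSpace ℝ (Fin d) → ℝ≥0∞ := fun x => V x ^ p with hVp
  have hVpmeas : Measurable Vp := hVmeas.pow_const _
  suffices h : ∫⁻ x, Vp x ≤ R ^ p by
    calc (∫⁻ x, Vp x) ^ (1/p) ≤ (R ^ p) ^ (1/p) := ENNReal.rpow_le_rpow h (by positivity)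
      _ = R := by rw [← ENNReal.rpow_mul, mul_one_div, div_self hp0.ne', ENNReal.rpow_one]
  -- each ball piece is bounded by R ^ p
  have hball : ∀ n : ℕ, ∫⁻ x in Metric.closedBall (0 : EuclideanSpace ℝ (Fin d)) n, Vp x ≤ R ^ p := by
    intro n
    obtain ⟨C, hC, hCb⟩ := hbd n
    have hfin : ∫⁻ x in Metric.closedBall (0 : EuclideanSpace ℝ (Fin d)) n,
        (∫⁻ t, f (x, t) ∂ν) ^ p ≠ ∞ := by
      have hb : ∀ x ∈ Metric.closedBall (0 : EuclideanSpace ℝ (Fin d)) n,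
          (∫⁻ t, f (x, t) ∂ν) ^ p ≤ (C * ν Set.univ) ^ p := by
        intro x hx
        refine ENNReal.rpow_le_rpow ?_ hp0.le
        calc ∫⁻ t, f (x, t) ∂ν ≤ ∫⁻ _, C ∂ν := lintegral_mono_ae (hCb x hx)
          _ = C * ν Set.univ := lintegral_const C
      have : ∫⁻ x in Metric.closedBall (0 : EuclideanSpace ℝ (Fin d)) n,
          (∫⁻ t, f (x, t) ∂ν) ^ p ≤ (C * ν Set.univ) ^ p *
            volume (Metric.closedBall (0 : EuclideanSpace ℝ (Fin d)) n) := by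
        rw [← setLIntegral_const]
        exact setLIntegral_mono' measurableSet_closedBall hb
      refine ne_top_of_le_ne_top ?_ this
      exact ENNReal.mul_ne_top
        (ENNReal.rpow_ne_top_of_nonneg hp0.le
          (ENNReal.mul_ne_top hC (measure_ne_top ν _)))
        (isCompact_closedBall _ _).measure_lt_top.ne
    have hm := mink_fin (volume.restrict (Metric.closedBall (0 : EuclideanSpace ℝ (Fin d)) n))
      ν f hf p hp hfin
    have hm2 : (∫⁻ x in Metric.closedBall (0 : EuclideanSpace ℝ (Fin d)) n, Vp x) ^ (1/p) ≤ R := by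
      refine hm.trans (lintegral_mono fun t => ?_)
      exact ENNReal.rpow_le_rpow (setLIntegral_le_lintegral _ _) (by positivity)
    calc ∫⁻ x in Metric.closedBall (0 : EuclideanSpace ℝ (Fin d)) n, Vp x
        = ((∫⁻ x in Metric.closedBall (0 : EuclideanSpace ℝ (Fin d)) n, Vp x) ^ (1/p)) ^ p := by
          rw [← ENNReal.rpow_mul, one_div_mul_cancel hp0.ne', ENNReal.rpow_one]
      _ ≤ R ^ p := ENNReal.rpow_le_rpow hm2 hp0.le
  -- monotone convergence over balls
  have hsup : ∫⁻ x, Vp x = ⨆ n : ℕ,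
      ∫⁻ x in Metric.closedBall (0 : EuclideanSpace ℝ (Fin d)) n, Vp x := by
    have heq : ∀ x, Vp x = ⨆ n : ℕ,
        (Metric.closedBall (0 : EuclideanSpace ℝ (Fin d)) n).indicator Vp x := by
      intro x
      refine le_antisymm ?_ (iSup_le fun n => Set.indicator_le_self _ _ x)
      refine le_trans ?_ (le_iSup _ ⌈‖x‖⌉₊)
      rw [Set.indicator_of_mem]
      simp only [Metric.mem_closedBall, dist_zero_right]
      exact Nat.le_ceil _
    calc ∫⁻ x, Vp x = ∫⁻ x, ⨆ n : ℕ,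
          (Metric.closedBall (0 : EuclideanSpace ℝ (Fin d)) n).indicator Vp x := by
          exact lintegral_congr heq
      _ = ⨆ n : ℕ, ∫⁻ x,
          (Metric.closedBall (0 : EuclideanSpace ℝ (Fin d)) n).indicator Vp x := by
          refine lintegral_iSup (fun n => hVpmeas.indicator measurableSet_closedBall) ?_
          intro a b hab
          exact fun x => Set.indicator_le_indicator_of_subset
            (Metric.closedBall_subset_closedBall (by exact_mod_cast hab)) (fun _ => zero_le) x
      _ = ⨆ n : ℕ, ∫⁻ x in Metric.closedBall (0 : EuclideanSpace ℝ (Fin d)) n, Vp x := by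
          refine iSup_congr fun n => ?_
          exact lintegral_indicator measurableSet_closedBall Vp
  rw [hsup]
  exact iSup_le hball

lemma rpow_bounds {y t β : ℝ} (hy : 0 < y) (ht : t ∈ Set.Ioo (y/2) y) :
    2 ^ (-|β|) * y ^ β ≤ t ^ β ∧ t ^ β ≤ 2 ^ |β| * y ^ β := by
  obtain ⟨ht1, ht2⟩ := ht
  have hy2 : 0 < y / 2 := by linarith
  have ht0 : 0 < t := lt_trans hy2 ht1
  have hhalf : (y / 2) ^ β = 2 ^ (-β) * y ^ β := by
    rw [div_eq_mul_inv, Real.mul_rpow hy.le (by norm_num), Real.rpow_neg (by norm_num)]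
    rw [Real.inv_rpow (by norm_num)]
    ring
  rcases le_or_gt 0 β with hβ | hβ
  · rw [abs_of_nonneg hβ]
    constructor
    · calc 2 ^ (-β) * y ^ β = (y/2) ^ β := hhalf.symm
        _ ≤ t ^ β := Real.rpow_le_rpow hy2.le ht1.le hβ
    · calc t ^ β ≤ y ^ β := Real.rpow_le_rpow ht0.le ht2.le hβ
        _ ≤ 2 ^ β * y ^ β := by
            nlinarith [Real.one_le_rpow (show (1:ℝ) ≤ 2 by norm_num) hβ,
              Real.rpow_nonneg hy.le β]
  · rw [abs_of_neg hβ]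
    constructor
    · have h1 : y ^ β ≤ t ^ β := Real.rpow_le_rpow_of_nonpos ht0 ht2.le hβ.le
      have h2 : (2:ℝ) ^ (-(-β)) ≤ 1 := by
        rw [neg_neg]
        exact Real.rpow_le_one_of_one_le_of_nonpos (by norm_num) hβ.le
      nlinarith [Real.rpow_nonneg hy.le β, Real.rpow_pos_of_pos (show (0:ℝ)<2 by norm_num) (-(-β))]
    · calc t ^ β ≤ (y/2) ^ β := Real.rpow_le_rpow_of_nonpos hy2 ht1.le hβ.le
        _ = 2 ^ (-β) * y ^ β := hhalf


/-- Interior estimate: for `u` continuously differentiable up to the boundary on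
`ℝ^d × [0,1]` and `y ∈ (0,1)`, the `L_p` norm of `u(·,y)` is bounded by
`N y^{-(1+α)/q}` times the weighted mixed norm of `u` plus `y` times that of the vertical
derivative `D_y u`, both on `ℝ^d × (0,y)`.  The constant `N` depends only on `q`, `α`. -/
theorem interior_Lp_estimate (q α : ℝ) (hq : 1 ≤ q) (hα : α < q - 1) :
    ∃ N : ℝ, 0 < N ∧ ∀ (d : ℕ) (p : ℝ), 1 ≤ p →
      ∀ u : EuclideanSpace ℝ (Fin d) × ℝ → ℝ,
        ContDiffOn ℝ 1 u (Set.univ ×ˢ Set.Icc 0 1) →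
        ∀ y : ℝ, y ∈ Set.Ioo (0 : ℝ) 1 →
        (∫⁻ x, ENNReal.ofReal (|u (x, y)| ^ p)) ^ (1 / p)
          ≤ ENNReal.ofReal (N * y ^ (-(1 + α) / q)) *
            ((∫⁻ s in Set.Ioo (0 : ℝ) y,
                (∫⁻ x, ENNReal.ofReal (|u (x, s)| ^ p)) ^ (q / p) *
                  ENNReal.ofReal (s ^ α)) ^ (1 / q)
             + ENNReal.ofReal y *
               (∫⁻ s in Set.Ioo (0 : ℝ) y,
                 (∫⁻ x, ENNReal.ofReal (|deriv (fun t => u (x, t)) s| ^ p)) ^ (q / p) *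
                   ENNReal.ofReal (s ^ α)) ^ (1 / q)) := by
  have hN : (0:ℝ) < 2 ^ (3 + |α|) := Real.rpow_pos_of_pos two_pos _
  refine ⟨2 ^ (3 + |α|), hN, ?_⟩
  intro d p hp u hu y hy
  obtain ⟨hy0, hy1⟩ := hy
  have hq0 : (0:ℝ) < q := lt_of_lt_of_le one_pos hq
  have hp0 : (0:ℝ) < p := lt_of_lt_of_le one_pos hp
  have hm0 : 0 < y / 2 := by linarith
  have hmy : y / 2 < y := by linarith
  have hsub01 : Set.Icc (y/2) y ⊆ Set.Ioo (0:ℝ) 1 := fun t ht => ⟨lt_of_lt_of_le hm0 ht.1,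
    lt_of_le_of_lt ht.2 hy1⟩
  have hIoo01 : Set.Ioo (y/2) y ⊆ Set.Ioo (0:ℝ) 1 := fun t ht =>
    hsub01 ⟨ht.1.le, ht.2.le⟩
  have hIoo0y : Set.Ioo (y/2) y ⊆ Set.Ioo (0:ℝ) y := fun t ht => ⟨lt_trans hm0 ht.1, ht.2⟩
  haveI : IsFiniteMeasure (volume.restrict (Set.Ioo (y/2) y)) := by
    constructor
    rw [Measure.restrict_apply_univ, Real.volume_Ioo]
    exact ENNReal.ofReal_lt_top
  -- the vertical derivative as a measurable function
  set D' : EuclideanSpace ℝ (Fin d) × ℝ → ℝ :=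
    fun z => fderiv ℝ u z ((0 : EuclideanSpace ℝ (Fin d)), (1:ℝ)) with hD'def
  have hD'meas : Measurable D' :=
    measurable_fderiv_apply_const ℝ u ((0 : EuclideanSpace ℝ (Fin d)), (1:ℝ))
  have hUopen : IsOpen ((Set.univ : Set (EuclideanSpace ℝ (Fin d))) ×ˢ Set.Ioo (0:ℝ) 1) :=
    isOpen_univ.prod isOpen_Ioo
  have hu' : ContDiffOn ℝ 1 u ((Set.univ : Set (EuclideanSpace ℝ (Fin d))) ×ˢ Set.Ioo (0:ℝ) 1) :=
    hu.mono (Set.prod_mono Set.Subset.rfl Set.Ioo_subset_Icc_self)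
  have hcontD : ContinuousOn D'
      ((Set.univ : Set (EuclideanSpace ℝ (Fin d))) ×ˢ Set.Ioo (0:ℝ) 1) := by
    have h1 := hu'.continuousOn_fderiv_of_isOpen hUopen le_rfl
    exact h1.clm_apply continuousOn_const
  have hdiffat : ∀ x : EuclideanSpace ℝ (Fin d), ∀ t ∈ Set.Ioo (0:ℝ) 1,
      HasDerivAt (fun r => u (x, r)) (D' (x, t)) t := by
    intro x t ht
    have hmem : (Set.univ ×ˢ Set.Icc (0:ℝ) 1) ∈ nhds ((x, t) : EuclideanSpace ℝ (Fin d) × ℝ) :=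
      Filter.mem_of_superset (hUopen.mem_nhds ⟨Set.mem_univ x, ht⟩)
        (Set.prod_mono Set.Subset.rfl Set.Ioo_subset_Icc_self)
    have hdiff : DifferentiableAt ℝ u (x, t) :=
      (hu.contDiffAt hmem).differentiableAt one_ne_zero
    have hγ : HasDerivAt (fun r : ℝ => ((x, r) : EuclideanSpace ℝ (Fin d) × ℝ))
        ((0 : EuclideanSpace ℝ (Fin d)), (1:ℝ)) t :=
      (hasDerivAt_const t x).prodMk (hasDerivAt_id t)
    exact hdiff.hasFDerivAt.comp_hasDerivAt t hγ
  have hderiv_eq : ∀ x : EuclideanSpace ℝ (Fin d), ∀ t ∈ Set.Ioo (0:ℝ) 1,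
      deriv (fun r => u (x, r)) t = D' (x, t) := fun x t ht => (hdiffat x t ht).deriv
  have hucont : ∀ s ∈ Set.Icc (0:ℝ) 1, Continuous fun x : EuclideanSpace ℝ (Fin d) => u (x, s) := by
    intro s hs
    rw [← continuousOn_univ]
    exact hu.continuousOn.comp (continuous_id.prodMk continuous_const).continuousOn
      (fun x _ => ⟨Set.mem_univ x, hs⟩)
  -- main objects
  set F : ℝ → ℝ≥0∞ := fun s => (∫⁻ x, ENNReal.ofReal (|u (x, s)| ^ p)) ^ (1 / p) with hFdef
  set G : ℝ → ℝ≥0∞ := fun t => (∫⁻ x, ENNReal.ofReal (|D' (x, t)| ^ p)) ^ (1 / p) with hGdef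
  set V : EuclideanSpace ℝ (Fin d) → ℝ≥0∞ :=
    fun x => ∫⁻ t in Set.Ioo (y/2) y, ENNReal.ofReal |D' (x, t)| with hVdef
  set A := ∫⁻ s in Set.Ioo (0:ℝ) y,
      (∫⁻ x, ENNReal.ofReal (|u (x, s)| ^ p)) ^ (q / p) * ENNReal.ofReal (s ^ α) with hAdef
  set B := ∫⁻ s in Set.Ioo (0:ℝ) y,
      (∫⁻ x, ENNReal.ofReal (|deriv (fun t => u (x, t)) s| ^ p)) ^ (q / p) *
        ENNReal.ofReal (s ^ α) with hBdef
  set AI := ∫⁻ s in Set.Ioo (y/2) y, F s ^ q * ENNReal.ofReal (s ^ α) with hAIdef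
  set BI := ∫⁻ t in Set.Ioo (y/2) y, G t ^ q * ENNReal.ofReal (t ^ α) with hBIdef
  set W := ∫⁻ s in Set.Ioo (y/2) y, ENNReal.ofReal (s ^ α) with hWdef
  set K := ENNReal.ofReal (2 ^ |α| * y ^ (1 - (1 + α) / q)) * B ^ (1 / q) with hKdef
  have hrpow_q : ∀ X : ℝ≥0∞, (X ^ (1/p)) ^ q = X ^ (q / p) := by
    intro X
    rw [← ENNReal.rpow_mul, div_mul_eq_mul_div, one_mul]
  -- Step 1 : FTC + Minkowski sum inequality
  have hVmeas : Measurable V := by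
    rw [hVdef]
    exact (hD'meas.abs.ennreal_ofReal).lintegral_prod_right'
  have step1 : ∀ s ∈ Set.Ioo (y/2) y, F y ≤ F s + (∫⁻ x, V x ^ p) ^ (1/p) := by
    intro s hs
    obtain ⟨hs1, hs2⟩ := hs
    have hs0 : 0 < s := lt_trans hm0 hs1
    have hsy : s ≤ y := hs2.le
    have huIcc : Set.uIcc s y = Set.Icc s y := Set.uIcc_of_le hsy
    have hsIcc : s ∈ Set.Icc (0:ℝ) 1 := ⟨hs0.le, hsy.trans hy1.le⟩
    have hyIcc : y ∈ Set.Icc (0:ℝ) 1 := ⟨hy0.le, hy1.le⟩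
    -- pointwise estimate via FTC
    have ptwise : ∀ x, ENNReal.ofReal |u (x, y)| ≤ ENNReal.ofReal |u (x, s)| + V x := by
      intro x
      have hcont' : ContinuousOn (fun t => D' (x, t)) (Set.Icc (y/2) y) :=
        hcontD.comp (continuous_const.prodMk continuous_id).continuousOn
          (fun t ht => ⟨Set.mem_univ x, hsub01 ht⟩)
      have hder : ∀ t ∈ Set.uIcc s y, HasDerivAt (fun r => u (x, r)) (D' (x, t)) t := by
        intro t ht
        rw [huIcc] at ht
        exact hdiffat x t ⟨lt_of_lt_of_le hs0 ht.1, lt_of_le_of_lt ht.2 hy1⟩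
      have hint : IntervalIntegrable (fun t => D' (x, t)) volume s y := by
        refine (hcont'.mono ?_).intervalIntegrable
        rw [huIcc]
        exact Set.Icc_subset_Icc hs1.le le_rfl
      have hftc : ∫ t in s..y, D' (x, t) = u (x, y) - u (x, s) :=
        intervalIntegral.integral_eq_sub_of_hasDerivAt hder hint
      have habsint : IntegrableOn (fun t => |D' (x, t)|) (Set.Ioc (y/2) y) volume :=
        (hcont'.abs.integrableOn_Icc).mono_set Set.Ioc_subset_Icc_self
      have h2 : |∫ t in s..y, D' (x, t)| ≤ ∫ t in Set.Ioo (y/2) y, |D' (x, t)| := by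
        calc |∫ t in s..y, D' (x, t)| ≤ ∫ t in s..y, |D' (x, t)| :=
              intervalIntegral.abs_integral_le_integral_abs hsy
          _ = ∫ t in Set.Ioc s y, |D' (x, t)| := intervalIntegral.integral_of_le hsy
          _ ≤ ∫ t in Set.Ioc (y/2) y, |D' (x, t)| := by
              refine setIntegral_mono_set habsint ?_ ?_
              · exact Filter.Eventually.of_forall fun t => abs_nonneg _
              · exact HasSubset.Subset.eventuallyLE (Set.Ioc_subset_Ioc hs1.le le_rfl)
          _ = ∫ t in Set.Ioo (y/2) y, |D' (x, t)| := integral_Ioc_eq_integral_Ioo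
      have h3 : |u (x, y)| ≤ |u (x, s)| + ∫ t in Set.Ioo (y/2) y, |D' (x, t)| := by
        have h4 : u (x, y) = u (x, s) + ∫ t in s..y, D' (x, t) := by rw [hftc]; ring
        calc |u (x, y)| ≤ |u (x, s)| + |∫ t in s..y, D' (x, t)| := by
              rw [h4]; exact abs_add_le _ _
          _ ≤ |u (x, s)| + ∫ t in Set.Ioo (y/2) y, |D' (x, t)| := by linarith [h2]
      have hVx : ENNReal.ofReal (∫ t in Set.Ioo (y/2) y, |D' (x, t)|) = V x := by
        rw [hVdef]
        exact ofReal_integral_eq_lintegral_ofReal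
          (habsint.mono_set Set.Ioo_subset_Ioc_self)
          (Filter.Eventually.of_forall fun t => abs_nonneg _)
      calc ENNReal.ofReal |u (x, y)|
          ≤ ENNReal.ofReal (|u (x, s)| + ∫ t in Set.Ioo (y/2) y, |D' (x, t)|) :=
            ENNReal.ofReal_le_ofReal h3
        _ = ENNReal.ofReal |u (x, s)| + ENNReal.ofReal (∫ t in Set.Ioo (y/2) y, |D' (x, t)|) :=
            ENNReal.ofReal_add (abs_nonneg _)
              (integral_nonneg fun t => abs_nonneg _)
        _ = ENNReal.ofReal |u (x, s)| + V x := by rw [hVx]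
    -- Minkowski sum inequality
    have hf1 : Measurable fun x : EuclideanSpace ℝ (Fin d) => ENNReal.ofReal |u (x, s)| :=
      ((hucont s hsIcc).abs.measurable).ennreal_ofReal
    have hmk := ENNReal.lintegral_Lp_add_le (μ := (volume : Measure (EuclideanSpace ℝ (Fin d))))
      (f := fun x : EuclideanSpace ℝ (Fin d) => ENNReal.ofReal |u (x, s)|) (g := V)
      hf1.aemeasurable hVmeas.aemeasurable hp
    simp only [Pi.add_apply] at hmk
    have hFy : F y = (∫⁻ x, (ENNReal.ofReal |u (x, y)|) ^ p) ^ (1/p) := by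
      rw [hFdef]
      simp only []
      congr 1
      refine lintegral_congr fun x => ?_
      rw [ENNReal.ofReal_rpow_of_nonneg (abs_nonneg _) hp0.le]
    have hFs : (∫⁻ x, (ENNReal.ofReal |u (x, s)|) ^ p) ^ (1/p) = F s := by
      rw [hFdef]
      simp only []
      congr 1
      refine lintegral_congr fun x => ?_
      rw [ENNReal.ofReal_rpow_of_nonneg (abs_nonneg _) hp0.le]
    calc F y = (∫⁻ x, (ENNReal.ofReal |u (x, y)|) ^ p) ^ (1/p) := hFy
      _ ≤ (∫⁻ x, (ENNReal.ofReal |u (x, s)| + V x) ^ p) ^ (1/p) := by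
          refine ENNReal.rpow_le_rpow (lintegral_mono fun x => ?_) (by positivity)
          exact ENNReal.rpow_le_rpow (ptwise x) hp0.le
      _ ≤ (∫⁻ x, (ENNReal.ofReal |u (x, s)|) ^ p) ^ (1/p) + (∫⁻ x, V x ^ p) ^ (1/p) := hmk
      _ = F s + (∫⁻ x, V x ^ p) ^ (1/p) := by rw [hFs]
  -- Step 2 : Minkowski integral inequality
  have step2 : (∫⁻ x, V x ^ p) ^ (1/p) ≤ ∫⁻ t in Set.Ioo (y/2) y, G t := by
    have hfm : Measurable fun z : EuclideanSpace ℝ (Fin d) × ℝ => ENNReal.ofReal |D' z| :=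
      hD'meas.abs.ennreal_ofReal
    have hbd : ∀ n : ℕ, ∃ C : ℝ≥0∞, C ≠ ∞ ∧
        ∀ x ∈ Metric.closedBall (0 : EuclideanSpace ℝ (Fin d)) n,
          ∀ᵐ t ∂(volume.restrict (Set.Ioo (y/2) y)),
            ENNReal.ofReal |D' (x, t)| ≤ C := by
      intro n
      have hKc : IsCompact ((Metric.closedBall (0 : EuclideanSpace ℝ (Fin d)) n) ×ˢ
          Set.Icc (y/2) y) := (isCompact_closedBall _ _).prod isCompact_Icc
      have hKsub : (Metric.closedBall (0 : EuclideanSpace ℝ (Fin d)) n) ×ˢ Set.Icc (y/2) y ⊆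
          (Set.univ : Set (EuclideanSpace ℝ (Fin d))) ×ˢ Set.Ioo (0:ℝ) 1 :=
        Set.prod_mono (Set.subset_univ _) hsub01
      obtain ⟨C, hC⟩ := hKc.exists_bound_of_continuousOn (hcontD.mono hKsub)
      refine ⟨ENNReal.ofReal C, ENNReal.ofReal_ne_top, fun x hx => ?_⟩
      refine (ae_restrict_mem measurableSet_Ioo).mono fun t ht => ?_
      refine ENNReal.ofReal_le_ofReal ?_
      have := hC (x, t) ⟨hx, ⟨ht.1.le, ht.2.le⟩⟩
      rwa [Real.norm_eq_abs] at this
    have hm := mink_euclid d (volume.restrict (Set.Ioo (y/2) y))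
      (fun z => ENNReal.ofReal |D' z|) hfm p hp hbd
    refine le_trans hm (le_of_eq (lintegral_congr fun t => ?_))
    rw [hGdef]
    simp only []
    congr 1
    refine lintegral_congr fun x => ?_
    rw [ENNReal.ofReal_rpow_of_nonneg (abs_nonneg _) hp0.le]
  -- Step 3 : Hölder in the vertical variable
  have hGmeas : Measurable G := by
    rw [hGdef]
    exact ((hD'meas.abs.pow measurable_const).ennreal_ofReal.lintegral_prod_left').pow
      measurable_const
  have step3 : (∫⁻ t in Set.Ioo (y/2) y, G t)
      ≤ ENNReal.ofReal (2 ^ |α| * y ^ (1 - (1 + α) / q)) * BI ^ (1/q) := by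
    rcases eq_or_lt_of_le hq with hq1 | hq1
    · -- q = 1
      subst hq1
      have hexp : 1 - (1 + α) / 1 = -α := by ring
      rw [hexp]
      simp only [ne_eq, one_ne_zero, not_false_eq_true, div_self, ENNReal.rpow_one]
      have hconst : (2:ℝ) ^ |α| * y ^ (-α) ≥ 0 := by positivity
      calc (∫⁻ t in Set.Ioo (y/2) y, G t)
          ≤ ∫⁻ t in Set.Ioo (y/2) y,
              ENNReal.ofReal (2 ^ |α| * y ^ (-α)) * (G t ^ (1:ℝ) * ENNReal.ofReal (t ^ α)) := by
            refine setLIntegral_mono' measurableSet_Ioo fun t ht => ?_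
            have ht0 : 0 < t := lt_trans hm0 ht.1
            have hlow := (rpow_bounds (β := α) hy0 ht).1
            have h1 : (1:ℝ≥0∞) ≤ ENNReal.ofReal (2 ^ |α| * y ^ (-α)) * ENNReal.ofReal (t ^ α) := by
              rw [← ENNReal.ofReal_mul hconst]
              rw [show (1:ℝ≥0∞) = ENNReal.ofReal 1 by simp]
              refine ENNReal.ofReal_le_ofReal ?_
              have e1 : (2:ℝ) ^ |α| * 2 ^ (-|α|) = 1 := by
                rw [← Real.rpow_add (by norm_num : (0:ℝ) < 2)]; simp
              have e2 : y ^ (-α) * y ^ α = 1 := by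
                rw [← Real.rpow_add hy0]; simp
              have h3 : 2 ^ |α| * y ^ (-α) * (2 ^ (-|α|) * y ^ α) ≤ 2 ^ |α| * y ^ (-α) * t ^ α :=
                mul_le_mul_of_nonneg_left hlow hconst
              nlinarith [h3]
            calc G t = 1 * G t := (one_mul _).symm
              _ ≤ (ENNReal.ofReal (2 ^ |α| * y ^ (-α)) * ENNReal.ofReal (t ^ α)) * G t :=
                  mul_le_mul_left h1 _
              _ = ENNReal.ofReal (2 ^ |α| * y ^ (-α)) * (G t ^ (1:ℝ) * ENNReal.ofReal (t ^ α)) := by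
                  rw [ENNReal.rpow_one]; ring
        _ = ENNReal.ofReal (2 ^ |α| * y ^ (-α)) * BI := by
            rw [hBIdef, lintegral_const_mul]
            exact (hGmeas.pow measurable_const).mul
              ((measurable_id.pow measurable_const).ennreal_ofReal)
    · -- q > 1
      have hconj : q.HolderConjugate (q / (q - 1)) := Real.HolderConjugate.conjExponent hq1
      set q' := q / (q - 1) with hq'def
      have hq'0 : 0 < q' := hconj.symm.pos
      have hq1ne : q - 1 ≠ 0 := by linarith
      set f : ℝ → ℝ≥0∞ := fun t => G t * ENNReal.ofReal (t ^ (α/q)) with hfdef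
      set g : ℝ → ℝ≥0∞ := fun t => ENNReal.ofReal (t ^ (-(α/q))) with hgdef
      have hfm : Measurable f := hGmeas.mul ((measurable_id.pow measurable_const).ennreal_ofReal)
      have hgm : Measurable g := (measurable_id.pow measurable_const).ennreal_ofReal
      have hfg : (∫⁻ t in Set.Ioo (y/2) y, G t) = ∫⁻ t in Set.Ioo (y/2) y, f t * g t := by
        refine setLIntegral_congr_fun measurableSet_Ioo
          (fun t ht => ?_)
        have ht0 : 0 < t := lt_trans hm0 ht.1
        rw [hfdef, hgdef]
        simp only []
        rw [mul_assoc, ← ENNReal.ofReal_mul (Real.rpow_nonneg ht0.le _),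
          ← Real.rpow_add ht0]
        simp
      have hholder := ENNReal.lintegral_mul_le_Lp_mul_Lq (volume.restrict (Set.Ioo (y/2) y))
        hconj hfm.aemeasurable hgm.aemeasurable
      have hfq : (∫⁻ t in Set.Ioo (y/2) y, f t ^ q) = BI := by
        rw [hBIdef]
        refine setLIntegral_congr_fun measurableSet_Ioo
          (fun t ht => ?_)
        have ht0 : 0 < t := lt_trans hm0 ht.1
        rw [hfdef]
        simp only []
        rw [ENNReal.mul_rpow_of_nonneg _ _ hq0.le,
          ENNReal.ofReal_rpow_of_nonneg (Real.rpow_nonneg ht0.le _) hq0.le,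
          ← Real.rpow_mul ht0.le, div_mul_cancel₀ _ hq0.ne']
      have hb1 : |(-(α/q)) * q'| / q' = |α| / q := by
        rw [abs_mul, abs_neg, abs_div, abs_of_pos hq0, abs_of_pos hq'0]
        field_simp
      have hb2 : ((-(α/q)) * q' + 1) / q' = 1 - (1+α)/q := by
        rw [hq'def]
        field_simp
        ring
      have hgq' : (∫⁻ t in Set.Ioo (y/2) y, g t ^ q')
          ≤ ENNReal.ofReal (2 ^ |(-(α/q)) * q'| * y ^ ((-(α/q)) * q') * y) := by
        calc (∫⁻ t in Set.Ioo (y/2) y, g t ^ q')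
            ≤ ∫⁻ _ in Set.Ioo (y/2) y,
                ENNReal.ofReal (2 ^ |(-(α/q)) * q'| * y ^ ((-(α/q)) * q')) := by
              refine setLIntegral_mono' measurableSet_Ioo fun t ht => ?_
              have ht0 : 0 < t := lt_trans hm0 ht.1
              rw [hgdef]
              simp only []
              rw [ENNReal.ofReal_rpow_of_nonneg (Real.rpow_nonneg ht0.le _) hq'0.le,
                ← Real.rpow_mul ht0.le]
              exact ENNReal.ofReal_le_ofReal (rpow_bounds hy0 ht).2
          _ = ENNReal.ofReal (2 ^ |(-(α/q)) * q'| * y ^ ((-(α/q)) * q')) *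
                volume (Set.Ioo (y/2) y) := setLIntegral_const _ _
          _ ≤ ENNReal.ofReal (2 ^ |(-(α/q)) * q'| * y ^ ((-(α/q)) * q')) *
                ENNReal.ofReal y := by
              refine mul_le_mul_right ?_ _
              rw [Real.volume_Ioo]
              exact ENNReal.ofReal_le_ofReal (by linarith)
          _ = ENNReal.ofReal (2 ^ |(-(α/q)) * q'| * y ^ ((-(α/q)) * q') * y) := by
              rw [← ENNReal.ofReal_mul (by positivity)]
      have hg' : (∫⁻ t in Set.Ioo (y/2) y, g t ^ q') ^ (1/q')
          ≤ ENNReal.ofReal (2 ^ |α| * y ^ (1 - (1+α)/q)) := by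
        have hc : ((2:ℝ) ^ |(-(α/q)) * q'| * y ^ ((-(α/q)) * q') * y) ^ (1/q')
            = 2 ^ (|(-(α/q)) * q'| / q') * y ^ (((-(α/q)) * q' + 1) / q') := by
          rw [show (2:ℝ) ^ |(-(α/q)) * q'| * y ^ ((-(α/q)) * q') * y
              = 2 ^ |(-(α/q)) * q'| * y ^ ((-(α/q)) * q' + 1) by
            rw [Real.rpow_add hy0, Real.rpow_one]; ring]
          rw [Real.mul_rpow (by positivity) (by positivity),
            ← Real.rpow_mul (by norm_num : (0:ℝ) ≤ 2), ← Real.rpow_mul hy0.le,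
            mul_one_div, mul_one_div]
        calc (∫⁻ t in Set.Ioo (y/2) y, g t ^ q') ^ (1/q')
            ≤ (ENNReal.ofReal (2 ^ |(-(α/q)) * q'| * y ^ ((-(α/q)) * q') * y)) ^ (1/q') :=
              ENNReal.rpow_le_rpow hgq' (by positivity)
          _ = ENNReal.ofReal (2 ^ (|α|/q) * y ^ (1 - (1+α)/q)) := by
              rw [ENNReal.ofReal_rpow_of_nonneg (by positivity) (by positivity), hc, hb1, hb2]
          _ ≤ ENNReal.ofReal (2 ^ |α| * y ^ (1 - (1+α)/q)) := by
              refine ENNReal.ofReal_le_ofReal ?_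
              refine mul_le_mul_of_nonneg_right ?_ (by positivity)
              exact Real.rpow_le_rpow_of_exponent_le one_le_two
                (div_le_self (abs_nonneg _) hq)
      calc (∫⁻ t in Set.Ioo (y/2) y, G t)
          = ∫⁻ t in Set.Ioo (y/2) y, f t * g t := hfg
        _ ≤ (∫⁻ t in Set.Ioo (y/2) y, f t ^ q) ^ (1/q) *
              (∫⁻ t in Set.Ioo (y/2) y, g t ^ q') ^ (1/q') := hholder
        _ = BI ^ (1/q) * (∫⁻ t in Set.Ioo (y/2) y, g t ^ q') ^ (1/q') := by rw [hfq]
        _ ≤ BI ^ (1/q) * ENNReal.ofReal (2 ^ |α| * y ^ (1 - (1+α)/q)) :=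
            mul_le_mul_right hg' _
        _ = ENNReal.ofReal (2 ^ |α| * y ^ (1 - (1 + α) / q)) * BI ^ (1/q) := mul_comm _ _
  -- Step 4 : comparisons with the full integrals
  have step4 : BI ≤ B := by
    have heq : BI = ∫⁻ t in Set.Ioo (y/2) y,
        (∫⁻ x, ENNReal.ofReal (|deriv (fun r => u (x, r)) t| ^ p)) ^ (q / p) *
          ENNReal.ofReal (t ^ α) := by
      rw [hBIdef]
      refine setLIntegral_congr_fun measurableSet_Ioo ?_
      intro t ht
      have h1 : (∫⁻ x, ENNReal.ofReal (|D' (x, t)| ^ p))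
          = ∫⁻ x, ENNReal.ofReal (|deriv (fun r => u (x, r)) t| ^ p) := by
        refine lintegral_congr fun x => ?_
        rw [hderiv_eq x t (hIoo01 ht)]
      rw [hGdef]
      simp only []
      rw [hrpow_q, h1]
    rw [heq, hBdef]
    exact lintegral_mono' (Measure.restrict_mono hIoo0y le_rfl) le_rfl
  have step4' : AI ≤ A := by
    have heq : AI = ∫⁻ s in Set.Ioo (y/2) y,
        (∫⁻ x, ENNReal.ofReal (|u (x, s)| ^ p)) ^ (q / p) * ENNReal.ofReal (s ^ α) := by
      rw [hAIdef]
      refine setLIntegral_congr_fun measurableSet_Ioo ?_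
      intro s _
      rw [hFdef]
      simp only []
      rw [hrpow_q]
    rw [heq, hAdef]
    exact lintegral_mono' (Measure.restrict_mono hIoo0y le_rfl) le_rfl
  have hmain : ∀ s ∈ Set.Ioo (y/2) y, F y ≤ F s + K := by
    intro s hs
    refine (step1 s hs).trans ?_
    refine add_le_add_right ?_ (F s)
    refine (step2.trans step3).trans ?_
    rw [hKdef]
    exact mul_le_mul_right (ENNReal.rpow_le_rpow step4 (by positivity)) _
  -- bounds on the weight integral W
  have hWlo : ENNReal.ofReal (2 ^ (-(1 + |α|)) * y ^ (1 + α)) ≤ W := by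
    have hre : (2:ℝ) ^ (-(1 + |α|)) * y ^ (1 + α) = (2 ^ (-|α|) * y ^ α) * (y - y/2) := by
      rw [Real.rpow_add hy0, Real.rpow_one,
        show -(1 + |α|) = (-1) + (-|α|) by ring, Real.rpow_add (by norm_num : (0:ℝ) < 2),
        Real.rpow_neg_one]
      ring
    calc ENNReal.ofReal (2 ^ (-(1 + |α|)) * y ^ (1 + α))
        = ENNReal.ofReal (2 ^ (-|α|) * y ^ α) * volume (Set.Ioo (y/2) y) := by
          rw [Real.volume_Ioo, ← ENNReal.ofReal_mul (by positivity), hre]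
      _ = ∫⁻ _ in Set.Ioo (y/2) y, ENNReal.ofReal (2 ^ (-|α|) * y ^ α) :=
          (setLIntegral_const _ _).symm
      _ ≤ W := by
          rw [hWdef]
          refine setLIntegral_mono' measurableSet_Ioo fun s hs => ?_
          exact ENNReal.ofReal_le_ofReal (rpow_bounds hy0 hs).1
  have hWpos : (0:ℝ) < 2 ^ (-(1 + |α|)) * y ^ (1 + α) := by positivity
  have hW0 : W ≠ 0 := ((ENNReal.ofReal_pos.mpr hWpos).trans_le hWlo).ne'
  have hWtop : W ≠ ∞ := by
    have hb : W ≤ ∫⁻ _ in Set.Ioo (y/2) y, ENNReal.ofReal (2 ^ |α| * y ^ α) := by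
      rw [hWdef]
      refine setLIntegral_mono' measurableSet_Ioo fun s hs => ?_
      exact ENNReal.ofReal_le_ofReal (rpow_bounds hy0 hs).2
    rw [setLIntegral_const] at hb
    exact ne_top_of_le_ne_top (ENNReal.mul_ne_top ENNReal.ofReal_ne_top
      (by rw [Real.volume_Ioo]; exact ENNReal.ofReal_ne_top)) hb
  -- averaging
  have h2q : ((2:ℝ≥0∞) ^ q) ≠ ∞ := ENNReal.rpow_ne_top_of_nonneg hq0.le (by norm_num)
  have hpow2 : ∀ a b : ℝ≥0∞, (a + b) ^ q ≤ 2 ^ q * (a ^ q + b ^ q) := by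
    intro a b
    have h1 : a + b ≤ 2 * (a ⊔ b) := by
      rw [two_mul]
      exact add_le_add le_sup_left le_sup_right
    calc (a + b) ^ q ≤ (2 * (a ⊔ b)) ^ q := ENNReal.rpow_le_rpow h1 hq0.le
      _ = 2 ^ q * (a ⊔ b) ^ q := ENNReal.mul_rpow_of_nonneg _ _ hq0.le
      _ ≤ 2 ^ q * (a ^ q + b ^ q) := by
          refine mul_le_mul_right ?_ _
          rcases le_total a b with h | h
          · rw [sup_eq_right.mpr h]; exact le_add_self
          · rw [sup_eq_left.mpr h]; exact le_self_add
  have hwmeas : Measurable fun s : ℝ => ENNReal.ofReal (s ^ α) :=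
    (measurable_id.pow measurable_const).ennreal_ofReal
  have hqq : ∀ X : ℝ≥0∞, (X ^ q) ^ (1/q) = X := by
    intro X
    rw [← ENNReal.rpow_mul, mul_one_div, div_self hq0.ne', ENNReal.rpow_one]
  have hqq' : ∀ X : ℝ≥0∞, (X ^ (1/q)) ^ q = X := by
    intro X
    rw [← ENNReal.rpow_mul, one_div_mul_cancel hq0.ne', ENNReal.rpow_one]
  have havg : F y ≤ 2 * AI ^ (1/q) * W⁻¹ ^ (1/q) + 2 * K := by
    have h1 : F y ^ q * W ≤ 2 ^ q * AI + 2 ^ q * K ^ q * W := by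
      calc F y ^ q * W = ∫⁻ s in Set.Ioo (y/2) y, F y ^ q * ENNReal.ofReal (s ^ α) := by
            rw [hWdef, lintegral_const_mul _ hwmeas]
        _ ≤ ∫⁻ s in Set.Ioo (y/2) y,
            (2 ^ q * (F s ^ q) * ENNReal.ofReal (s ^ α)
              + 2 ^ q * K ^ q * ENNReal.ofReal (s ^ α)) := by
            refine setLIntegral_mono' measurableSet_Ioo fun s hs => ?_
            have h2 : F y ^ q ≤ (F s + K) ^ q :=
              ENNReal.rpow_le_rpow (hmain s hs) hq0.le
            have h3 : F y ^ q ≤ 2 ^ q * (F s ^ q + K ^ q) := h2.trans (hpow2 _ _)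
            calc F y ^ q * ENNReal.ofReal (s ^ α)
                ≤ (2 ^ q * (F s ^ q + K ^ q)) * ENNReal.ofReal (s ^ α) :=
                  mul_le_mul_left h3 _
              _ = 2 ^ q * (F s ^ q) * ENNReal.ofReal (s ^ α)
                  + 2 ^ q * K ^ q * ENNReal.ofReal (s ^ α) := by ring
        _ = 2 ^ q * AI + 2 ^ q * K ^ q * W := by
            rw [lintegral_add_right' _ ((hwmeas.const_mul _).aemeasurable)]
            congr 1
            · rw [hAIdef, ← lintegral_const_mul' _ _ h2q]
              refine setLIntegral_congr_fun measurableSet_Ioo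
                (fun s _ => ?_)
              ring
            · rw [hWdef, lintegral_const_mul _ hwmeas]
    have h2 : F y ^ q ≤ 2 ^ q * AI * W⁻¹ + 2 ^ q * K ^ q := by
      have h3 := mul_le_mul_left h1 W⁻¹
      rw [mul_assoc, ENNReal.mul_inv_cancel hW0 hWtop, mul_one] at h3
      refine h3.trans (le_of_eq ?_)
      rw [add_mul, mul_assoc (2 ^ q * K ^ q), ENNReal.mul_inv_cancel hW0 hWtop, mul_one]
    calc F y = (F y ^ q) ^ (1/q) := (hqq _).symm
      _ ≤ (2 ^ q * AI * W⁻¹ + 2 ^ q * K ^ q) ^ (1/q) :=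
          ENNReal.rpow_le_rpow h2 (by positivity)
      _ ≤ 2 * AI ^ (1/q) * W⁻¹ ^ (1/q) + 2 * K := by
          have hb := ENNReal.rpow_add_rpow_le_add
            (2 * AI ^ (1/q) * W⁻¹ ^ (1/q)) (2 * K) hq
          have ha1 : (2 * AI ^ (1/q) * W⁻¹ ^ (1/q)) ^ q = 2 ^ q * AI * W⁻¹ := by
            rw [ENNReal.mul_rpow_of_nonneg _ _ hq0.le, ENNReal.mul_rpow_of_nonneg _ _ hq0.le,
              hqq', hqq']
          have ha2 : (2 * K) ^ q = 2 ^ q * K ^ q :=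
            ENNReal.mul_rpow_of_nonneg _ _ hq0.le
          rw [ha1, ha2] at hb
          exact hb
  -- final assembly
  have hWinv : W⁻¹ ^ (1/q) ≤ ENNReal.ofReal (2 ^ ((1+|α|)/q) * y ^ (-(1+α)/q)) := by
    have h1 : W⁻¹ ≤ ENNReal.ofReal ((2 ^ (-(1 + |α|)) * y ^ (1 + α))⁻¹) := by
      rw [ENNReal.ofReal_inv_of_pos hWpos]
      exact ENNReal.inv_le_inv' hWlo
    have h2 : ((2:ℝ) ^ (-(1+|α|)) * y ^ (1+α))⁻¹ ^ (1/q)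
        = 2 ^ ((1+|α|)/q) * y ^ (-(1+α)/q) := by
      rw [mul_inv, ← Real.rpow_neg (by norm_num : (0:ℝ) ≤ 2), neg_neg,
        ← Real.rpow_neg hy0.le, Real.mul_rpow (by positivity) (by positivity),
        ← Real.rpow_mul (by norm_num : (0:ℝ) ≤ 2), ← Real.rpow_mul hy0.le,
        mul_one_div, mul_one_div, neg_div]
    calc W⁻¹ ^ (1/q) ≤ (ENNReal.ofReal ((2 ^ (-(1 + |α|)) * y ^ (1 + α))⁻¹)) ^ (1/q) :=
        ENNReal.rpow_le_rpow h1 (by positivity)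
      _ = ENNReal.ofReal (2 ^ ((1+|α|)/q) * y ^ (-(1+α)/q)) := by
        rw [ENNReal.ofReal_rpow_of_nonneg (by positivity) (by positivity), h2]
  have hterm1 : 2 * AI ^ (1/q) * W⁻¹ ^ (1/q)
      ≤ ENNReal.ofReal (2 ^ (3+|α|) * y ^ (-(1+α)/q)) * A ^ (1/q) := by
    have hc : (2:ℝ) * (2 ^ ((1+|α|)/q) * y ^ (-(1+α)/q)) ≤ 2 ^ (3+|α|) * y ^ (-(1+α)/q) := by
      have he : (2:ℝ) * 2 ^ ((1+|α|)/q) = 2 ^ (1 + (1+|α|)/q) := by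
        rw [Real.rpow_add (by norm_num : (0:ℝ) < 2), Real.rpow_one]
      have hexp : 1 + (1+|α|)/q ≤ 3 + |α| := by
        have : (1+|α|)/q ≤ 1 + |α| := div_le_self (by positivity) hq
        linarith
      have h2 : (2:ℝ) ^ (1 + (1+|α|)/q) ≤ 2 ^ (3+|α|) :=
        Real.rpow_le_rpow_of_exponent_le one_le_two hexp
      rw [← mul_assoc, he]
      exact mul_le_mul_of_nonneg_right h2 (by positivity)
    calc 2 * AI ^ (1/q) * W⁻¹ ^ (1/q)
        ≤ 2 * A ^ (1/q) * ENNReal.ofReal (2 ^ ((1+|α|)/q) * y ^ (-(1+α)/q)) :=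
          mul_le_mul' (mul_le_mul_right (ENNReal.rpow_le_rpow step4' (by positivity)) 2) hWinv
      _ = ENNReal.ofReal (2 * (2 ^ ((1+|α|)/q) * y ^ (-(1+α)/q))) * A ^ (1/q) := by
          rw [ENNReal.ofReal_mul (show (0:ℝ) ≤ 2 by norm_num), ENNReal.ofReal_ofNat,
            ENNReal.ofReal_mul (show (0:ℝ) ≤ 2 ^ ((1+|α|)/q) by positivity)]
          ring
      _ ≤ ENNReal.ofReal (2 ^ (3+|α|) * y ^ (-(1+α)/q)) * A ^ (1/q) :=
          mul_le_mul_left (ENNReal.ofReal_le_ofReal hc) _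
  have hterm2 : 2 * K
      ≤ ENNReal.ofReal (2 ^ (3+|α|) * y ^ (-(1+α)/q)) * (ENNReal.ofReal y * B ^ (1/q)) := by
    have hy1e : y ^ (1 - (1+α)/q) = y * y ^ (-(1+α)/q) := by
      rw [show 1 - (1+α)/q = 1 + (-(1+α)/q) by ring, Real.rpow_add hy0, Real.rpow_one, neg_div]
    have hexp2 : (2:ℝ) * 2 ^ |α| ≤ 2 ^ (3+|α|) := by
      rw [show (2:ℝ) * 2 ^ |α| = 2 ^ (1 + |α|) by
        rw [Real.rpow_add (by norm_num : (0:ℝ) < 2), Real.rpow_one]]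
      exact Real.rpow_le_rpow_of_exponent_le one_le_two (by linarith [abs_nonneg α])
    calc 2 * K = 2 * (ENNReal.ofReal (2 ^ |α|) *
            (ENNReal.ofReal y * ENNReal.ofReal (y ^ (-(1+α)/q))) * B ^ (1/q)) := by
          rw [hKdef, hy1e, ENNReal.ofReal_mul (show (0:ℝ) ≤ 2 ^ |α| by positivity),
            ENNReal.ofReal_mul hy0.le]
      _ = ENNReal.ofReal (2 * 2 ^ |α| * y ^ (-(1+α)/q)) * (ENNReal.ofReal y * B ^ (1/q)) := by
          rw [ENNReal.ofReal_mul (show (0:ℝ) ≤ 2 * 2 ^ |α| by positivity),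
            ENNReal.ofReal_mul (show (0:ℝ) ≤ 2 by norm_num), ENNReal.ofReal_ofNat]
          ring
      _ ≤ ENNReal.ofReal (2 ^ (3+|α|) * y ^ (-(1+α)/q)) * (ENNReal.ofReal y * B ^ (1/q)) := by
          refine mul_le_mul_left (ENNReal.ofReal_le_ofReal ?_) _
          exact mul_le_mul_of_nonneg_right hexp2 (by positivity)
  have hfinal : F y ≤ ENNReal.ofReal (2 ^ (3+|α|) * y ^ (-(1+α)/q)) *
      (A ^ (1/q) + ENNReal.ofReal y * B ^ (1/q)) := by
    rw [mul_add]
    exact havg.trans (add_le_add hterm1 hterm2)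
  exact hfinal
end

section
/- Let p, q ∈ [1, ∞) and α ∈ (−q, −1]. If u : ℝ^d × [0,1) → ℝ is continuously differentiable on ℝ^d × (0,1) and both ‖u‖_{L_{p,q}(ℝ^d×(0,1), μ)} and ‖Du‖_{L_{p,q}(ℝ^d×(0,1), μ)} are finite, then lim_{y → 0^+} ‖u(·,y)‖_{L_p(ℝ^d)} = 0. -/
open MeasureTheory ENNReal Set

set_option maxHeartbeats 1600000

lemma iSup_min_natCast (a : ℝ≥0∞) : ⨆ n : ℕ, min a n = a := by
  refine le_antisymm (iSup_le fun n => min_le_left _ _) ?_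
  rcases eq_top_or_lt_top a with h | h
  · subst h
    simp [ENNReal.iSup_natCast]
  · obtain ⟨n, hn⟩ := ENNReal.exists_nat_gt h.ne
    exact le_iSup_of_le n (le_min le_rfl hn.le)

lemma indicator_one_le {γ : Type*} (t : Set γ) (a : γ) :
    t.indicator (fun _ => (1:ℝ≥0∞)) a ≤ 1 := by
  classical by_cases h : a ∈ t <;> simp [h]

lemma iSup_rpow_ennreal {ι : Sort*} (f : ι → ℝ≥0∞) {p : ℝ} (hp : 0 < p) :
    (⨆ i, f i) ^ p = ⨆ i, f i ^ p := by
  refine le_antisymm ?_ (iSup_le fun i => ENNReal.rpow_le_rpow (le_iSup f i) hp.le)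
  have h1 : (⨆ i, f i) ≤ (⨆ i, f i ^ p) ^ (1/p) := by
    refine iSup_le fun i => ?_
    rw [← ENNReal.rpow_le_rpow_iff hp, ← ENNReal.rpow_mul, one_div,
      inv_mul_cancel₀ hp.ne', ENNReal.rpow_one]
    exact le_iSup (fun i => f i ^ p) i
  refine (ENNReal.rpow_le_rpow h1 hp.le).trans_eq ?_
  rw [← ENNReal.rpow_mul, one_div, inv_mul_cancel₀ hp.ne', ENNReal.rpow_one]

lemma minkowski_aux {α β : Type*} [MeasurableSpace α] [MeasurableSpace β]
    (μ : Measure α) (ν : Measure β) [SigmaFinite μ] [SigmaFinite ν]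
    {p : ℝ} (hp : 1 < p) {f : α → β → ℝ≥0∞} (hf : Measurable (Function.uncurry f))
    (hT : (∫⁻ x, (∫⁻ s, f x s ∂ν) ^ p ∂μ) ≠ ⊤) :
    (∫⁻ x, (∫⁻ s, f x s ∂ν) ^ p ∂μ) ^ (1/p) ≤
      ∫⁻ s, (∫⁻ x, (f x s) ^ p ∂μ) ^ (1/p) ∂ν := by
  have hp0 : (0:ℝ) < p := lt_trans zero_lt_one hp
  set I : α → ℝ≥0∞ := fun x => ∫⁻ s, f x s ∂ν with hI
  set T := ∫⁻ x, I x ^ p ∂μ with hTdef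
  by_cases hT0 : T = 0
  · rw [hT0, ENNReal.zero_rpow_of_pos (by positivity)]; exact zero_le
  have hpq : p.HolderConjugate (Real.conjExponent p) := Real.HolderConjugate.conjExponent hp
  set q := Real.conjExponent p with hqdef
  have hImeas : Measurable I := hf.lintegral_prod_right
  set R := ∫⁻ s, (∫⁻ x, (f x s) ^ p ∂μ) ^ (1/p) ∂ν with hR
  have hRmeas : Measurable fun s => (∫⁻ x, (f x s) ^ p ∂μ) ^ (1/p) :=
    (Measurable.lintegral_prod_left (f := fun x s => f x s ^ p) (hf.pow_const p)).pow_const _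
  have h1 : T ≤ R * T ^ (1/q) := by
    calc T ≤ ∫⁻ x, I x * I x ^ (p - 1) ∂μ := by
          apply lintegral_mono fun x => ?_
          rcases eq_or_ne (I x) 0 with h0 | h0
          · rw [h0, ENNReal.zero_rpow_of_pos hp0]; exact zero_le
          rcases eq_or_ne (I x) ⊤ with ht | ht
          · rw [ht]; simp [ENNReal.top_rpow_of_pos (by linarith : (0:ℝ) < p - 1)]
          refine le_of_eq ?_
          nth_rw 2 [← ENNReal.rpow_one (I x)]
          rw [← ENNReal.rpow_add _ _ h0 ht, add_sub_cancel]
      _ = ∫⁻ x, ∫⁻ s, f x s * I x ^ (p-1) ∂ν ∂μ := by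
          refine lintegral_congr fun x => ?_
          have hfx : AEMeasurable (fun s => f x s) ν := (hf.comp measurable_prodMk_left).aemeasurable
          rw [lintegral_mul_const'' _ hfx]
      _ = ∫⁻ s, ∫⁻ x, f x s * I x ^ (p-1) ∂μ ∂ν := by
          apply lintegral_lintegral_swap
          exact (hf.mul ((hImeas.comp measurable_fst).pow_const _)).aemeasurable
      _ ≤ ∫⁻ s, (∫⁻ x, (f x s) ^ p ∂μ) ^ (1/p) * (∫⁻ x, (I x ^ (p-1)) ^ q ∂μ) ^ (1/q) ∂ν := by
          refine lintegral_mono fun s => ?_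
          exact ENNReal.lintegral_mul_le_Lp_mul_Lq μ hpq
            (hf.comp measurable_prodMk_right).aemeasurable
            ((hImeas.pow_const _).aemeasurable)
      _ = R * T ^ (1/q) := by
          have hIq : ∀ x, (I x ^ (p-1)) ^ q = I x ^ p := fun x => by
            rw [← ENNReal.rpow_mul, hpq.sub_one_mul_conj]
          simp_rw [hIq, ← hTdef]
          exact lintegral_mul_const'' _ hRmeas.aemeasurable
  have hTq0 : T ^ (1/q) ≠ 0 := by
    simp [ENNReal.rpow_eq_zero_iff, hT0, hT, hpq.symm.pos, hpq.symm.nonneg,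
      one_div_pos, not_lt.mpr]
  have hTqt : T ^ (1/q) ≠ ⊤ := by
    simp [ENNReal.rpow_eq_top_iff, hT0, hT, one_div_pos, hpq.symm.pos, not_lt.mpr]
  have h2 : T ^ (1/p) * T ^ (1/q) ≤ R * T ^ (1/q) := by
    have he : 1/p + 1/q = 1 := by rw [one_div, one_div, hpq.inv_add_inv_eq_one]
    rw [← ENNReal.rpow_add _ _ hT0 hT, he, ENNReal.rpow_one]
    exact h1
  exact (ENNReal.mul_le_mul_iff_left hTq0 hTqt).mp h2

lemma minkowski_lintegral {α β : Type*} [MeasurableSpace α] [MeasurableSpace β]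
    (μ : Measure α) (ν : Measure β) [SigmaFinite μ] [SigmaFinite ν]
    {p : ℝ} (hp : 1 ≤ p) {f : α → β → ℝ≥0∞} (hf : Measurable (Function.uncurry f)) :
    (∫⁻ x, (∫⁻ s, f x s ∂ν) ^ p ∂μ) ^ (1/p) ≤
      ∫⁻ s, (∫⁻ x, (f x s) ^ p ∂μ) ^ (1/p) ∂ν := by
  rcases eq_or_lt_of_le hp with rfl | hp1
  · simp only [one_div_one, ENNReal.rpow_one]
    exact le_of_eq (lintegral_lintegral_swap hf.aemeasurable)
  have hp0 : (0:ℝ) < p := lt_trans zero_lt_one hp1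
  set g : ℕ → α → β → ℝ≥0∞ := fun n x s =>
    (spanningSets μ n).indicator (fun _ => 1) x * (spanningSets ν n).indicator (fun _ => 1) s
      * min (f x s) n with hg
  have hgmeas : ∀ n, Measurable (Function.uncurry (g n)) := fun n =>
    (((measurable_const.indicator (measurableSet_spanningSets μ n)).comp measurable_fst).mul
      ((measurable_const.indicator (measurableSet_spanningSets ν n)).comp measurable_snd)).mul
      (hf.min measurable_const)
  have hgle : ∀ n x s, g n x s ≤ f x s := fun n x s => by
    calc g n x s ≤ 1 * 1 * min (f x s) n :=
          mul_le_mul' (mul_le_mul' (indicator_one_le _ _) (indicator_one_le _ _)) le_rfl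
      _ ≤ f x s := by rw [one_mul, one_mul]; exact min_le_left _ _
  have hgmono : ∀ m n, m ≤ n → ∀ x s, g m x s ≤ g n x s := by
    intro m n hmn x s
    refine mul_le_mul' (mul_le_mul' ?_ ?_) ?_
    · exact Set.indicator_le_indicator_of_subset (monotone_spanningSets μ hmn) (fun _ => zero_le) _
    · exact Set.indicator_le_indicator_of_subset (monotone_spanningSets ν hmn) (fun _ => zero_le) _
    · exact min_le_min le_rfl (by exact_mod_cast Nat.cast_le.mpr hmn)
  have hgsup : ∀ x s, (⨆ n, g n x s) = f x s := by
    intro x s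
    refine le_antisymm (iSup_le fun n => hgle n x s) ?_
    obtain ⟨n₁, hn₁⟩ : ∃ n, x ∈ spanningSets μ n := by
      have hx : x ∈ ⋃ n, spanningSets μ n := by rw [iUnion_spanningSets]; trivial
      exact Set.mem_iUnion.mp hx
    obtain ⟨n₂, hn₂⟩ : ∃ n, s ∈ spanningSets ν n := by
      have hs : s ∈ ⋃ n, spanningSets ν n := by rw [iUnion_spanningSets]; trivial
      exact Set.mem_iUnion.mp hs
    calc f x s = ⨆ m : ℕ, min (f x s) m := (iSup_min_natCast _).symm
      _ ≤ ⨆ m : ℕ, g (n₁ ⊔ n₂ ⊔ m) x s := by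
          refine iSup_mono fun m => ?_
          have hx : x ∈ spanningSets μ (n₁ ⊔ n₂ ⊔ m) :=
            monotone_spanningSets μ (le_trans le_sup_left le_sup_left) hn₁
          have hs : s ∈ spanningSets ν (n₁ ⊔ n₂ ⊔ m) :=
            monotone_spanningSets ν (le_trans le_sup_right le_sup_left) hn₂
          simp only [hg, Set.indicator_of_mem hx, Set.indicator_of_mem hs, one_mul]
          exact min_le_min le_rfl (by exact_mod_cast (le_sup_right : m ≤ n₁ ⊔ n₂ ⊔ m))
      _ ≤ ⨆ n, g n x s := iSup_le fun m => le_iSup (fun n => g n x s) _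
  set I : ℕ → α → ℝ≥0∞ := fun n x => ∫⁻ s, g n x s ∂ν with hIdef
  have hImeas : ∀ n, Measurable (I n) := fun n => (hgmeas n).lintegral_prod_right
  have hIsquare : ∀ n, (∫⁻ x, (I n x) ^ p ∂μ) ≠ ⊤ := by
    intro n
    set c : ℝ≥0∞ := (n : ℝ≥0∞) * ν (spanningSets ν n) with hc
    have hcne : c ≠ ⊤ :=
      ENNReal.mul_ne_top (ENNReal.natCast_ne_top n) (measure_spanningSets_lt_top ν n).ne
    have hb : ∀ x, I n x ≤ (spanningSets μ n).indicator (fun _ => c) x := by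
      intro x
      by_cases hx : x ∈ spanningSets μ n
      · rw [Set.indicator_of_mem hx]
        calc I n x ≤ ∫⁻ s, (spanningSets ν n).indicator (fun _ => (n:ℝ≥0∞)) s ∂ν := by
              refine lintegral_mono fun s => ?_
              by_cases hs : s ∈ spanningSets ν n
              · rw [Set.indicator_of_mem hs]
                calc g n x s ≤ 1 * 1 * min (f x s) n :=
                      mul_le_mul' (mul_le_mul' (indicator_one_le _ _) (indicator_one_le _ _)) le_rfl
                  _ ≤ (n:ℝ≥0∞) := by rw [one_mul, one_mul]; exact min_le_right _ _
              · rw [Set.indicator_of_notMem hs]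
                simp [hg, Set.indicator_of_notMem hs]
          _ = c := by
              rw [lintegral_indicator_const (measurableSet_spanningSets ν n)]
      · rw [Set.indicator_of_notMem hx]
        have : ∀ s, g n x s = 0 := fun s => by simp [hg, Set.indicator_of_notMem hx]
        simp [hIdef, this]
    have hb2 : (∫⁻ x, (I n x) ^ p ∂μ) ≤ c ^ p * μ (spanningSets μ n) := by
      calc (∫⁻ x, (I n x) ^ p ∂μ)
          ≤ ∫⁻ x, (spanningSets μ n).indicator (fun _ => c ^ p) x ∂μ := by
            refine lintegral_mono fun x => ?_
            by_cases hx : x ∈ spanningSets μ n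
            · rw [Set.indicator_of_mem hx]
              exact ENNReal.rpow_le_rpow ((hb x).trans_eq (Set.indicator_of_mem hx _)) hp0.le
            · have := (hb x).trans_eq (Set.indicator_of_notMem hx _)
              rw [Set.indicator_of_notMem hx, le_zero_iff.mp this,
                ENNReal.zero_rpow_of_pos hp0]
        _ = c ^ p * μ (spanningSets μ n) :=
            lintegral_indicator_const (measurableSet_spanningSets μ n) _
    exact ne_top_of_le_ne_top
      (ENNReal.mul_ne_top (ENNReal.rpow_ne_top_of_nonneg hp0.le hcne)
        (measure_spanningSets_lt_top μ n).ne) hb2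
  have hsup1 : ∀ x, (⨆ n, I n x) = ∫⁻ s, f x s ∂ν := by
    intro x
    rw [hIdef]
    rw [← lintegral_iSup
      (fun n => show Measurable fun s => g n x s from (hgmeas n).comp measurable_prodMk_left)
      (fun m n hmn s => hgmono m n hmn x s)]
    exact lintegral_congr fun s => hgsup x s
  have hstep : ∀ n, (∫⁻ x, (I n x) ^ p ∂μ) ^ (1/p) ≤
      ∫⁻ s, (∫⁻ x, (f x s) ^ p ∂μ) ^ (1/p) ∂ν := by
    intro n
    refine (minkowski_aux μ ν hp1 (hgmeas n) (hIsquare n)).trans ?_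
    refine lintegral_mono fun s => ENNReal.rpow_le_rpow ?_ (by positivity)
    exact lintegral_mono fun x => ENNReal.rpow_le_rpow (hgle n x s) hp0.le
  calc (∫⁻ x, (∫⁻ s, f x s ∂ν) ^ p ∂μ) ^ (1/p)
      = (∫⁻ x, ⨆ n, (I n x) ^ p ∂μ) ^ (1/p) := by
        congr 1
        refine lintegral_congr fun x => ?_
        rw [← iSup_rpow_ennreal _ hp0, hsup1 x]
    _ = (⨆ n, ∫⁻ x, (I n x) ^ p ∂μ) ^ (1/p) := by
        rw [lintegral_iSup (fun n => (hImeas n).pow_const p)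
          (fun m n hmn x => ENNReal.rpow_le_rpow
            (lintegral_mono fun s => hgmono m n hmn x s) hp0.le)]
    _ = ⨆ n, (∫⁻ x, (I n x) ^ p ∂μ) ^ (1/p) := iSup_rpow_ennreal _ (by positivity)
    _ ≤ ∫⁻ s, (∫⁻ x, (f x s) ^ p ∂μ) ^ (1/p) ∂ν := iSup_le hstep


/-- Vanishing trace when `α ∈ (-q, -1]`: if `u` is continuously differentiable on
`ℝ^d × (0,1)` and both `u` and its full gradient have finite weighted mixed
`L_{p,q}(ℝ^d × (0,1), y^α dx dy)` norm, then `‖u(·,y)‖_{L_p(ℝ^d)} → 0` as `y → 0⁺`. -/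
theorem vanishing_trace (d : ℕ) (p q α : ℝ) (hp : 1 ≤ p) (hq : 1 ≤ q)
    (hα1 : -q < α) (hα2 : α ≤ -1)
    (u : EuclideanSpace ℝ (Fin d) × ℝ → ℝ)
    (hu : ContDiffOn ℝ 1 u (Set.univ ×ˢ Set.Ioo 0 1))
    (hfin : (∫⁻ y in Set.Ioo (0 : ℝ) 1,
        (∫⁻ x, ENNReal.ofReal (|u (x, y)| ^ p)) ^ (q / p) * ENNReal.ofReal (y ^ α)) ≠ ⊤)
    (hDfin : (∫⁻ y in Set.Ioo (0 : ℝ) 1,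
        (∫⁻ x, ENNReal.ofReal (‖fderiv ℝ u (x, y)‖ ^ p)) ^ (q / p) *
          ENNReal.ofReal (y ^ α)) ≠ ⊤) :
    Filter.Tendsto (fun y : ℝ => (∫⁻ x, ENNReal.ofReal (|u (x, y)| ^ p)) ^ (1 / p))
      (nhdsWithin 0 (Set.Ioi 0)) (nhds 0) := by
  classical
  have hq1 : 1 < q := by linarith
  have hp0 : (0:ℝ) < p := lt_of_lt_of_le zero_lt_one hp
  have hq0 : (0:ℝ) < q := lt_trans zero_lt_one hq1
  have hα0 : α < 0 := lt_of_le_of_lt hα2 (by norm_num)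
  have hopen : IsOpen ((Set.univ : Set (EuclideanSpace ℝ (Fin d))) ×ˢ Set.Ioo (0:ℝ) 1) :=
    isOpen_univ.prod isOpen_Ioo
  set F : ℝ → ℝ≥0∞ := fun y => (∫⁻ x, ENNReal.ofReal (|u (x, y)| ^ p)) ^ (1/p) with hF
  set G : ℝ → ℝ≥0∞ :=
    fun s => (∫⁻ x, ENNReal.ofReal (‖fderiv ℝ u (x, s)‖ ^ p)) ^ (1/p) with hG
  -- joint measurability of the gradient term
  have hDjm : Measurable fun z : EuclideanSpace ℝ (Fin d) × ℝ =>
      ENNReal.ofReal (‖fderiv ℝ u z‖ ^ p) :=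
    (((measurable_fderiv ℝ u).norm).pow_const p).ennreal_ofReal
  have hGmeas : Measurable G := (hDjm.lintegral_prod_left').pow_const _
  -- the q-th power of G matches the integrand of `hDfin`
  have hGq : ∀ s : ℝ, G s ^ q
      = (∫⁻ x, ENNReal.ofReal (‖fderiv ℝ u (x, s)‖ ^ p)) ^ (q / p) := by
    intro s
    rw [hG, ← ENNReal.rpow_mul, one_div, inv_mul_eq_div]
  have hFq : ∀ s : ℝ, F s ^ q
      = (∫⁻ x, ENNReal.ofReal (|u (x, s)| ^ p)) ^ (q / p) := by
    intro s
    rw [hF, ← ENNReal.rpow_mul, one_div, inv_mul_eq_div]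
  have humeas : ∀ z : ℝ, 0 < z → z < 1 →
      Measurable fun x : EuclideanSpace ℝ (Fin d) => ENNReal.ofReal |u (x, z)| := by
    intro z h0 h1
    have hc : Continuous fun x : EuclideanSpace ℝ (Fin d) => u (x, z) := by
      rw [← continuousOn_univ]
      refine (hu.continuousOn).comp (Continuous.continuousOn (by continuity)) ?_
      intro x _
      exact ⟨trivial, h0, h1⟩
    exact (hc.abs).measurable.ennreal_ofReal
  -- Key estimate 1 : comparison of slices
  have hkey1 : ∀ y z : ℝ, 0 < y → y ≤ z → z < 1 →
      F y ≤ F z + ∫⁻ s in Set.Ioc y z, G s := by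
    intro y z h0y hyz hz1
    have h0z : 0 < z := lt_of_lt_of_le h0y hyz
    have hptwise : ∀ x, ENNReal.ofReal |u (x, y)| ≤ ENNReal.ofReal |u (x, z)| +
        ∫⁻ s in Set.Ioc y z, ENNReal.ofReal ‖fderiv ℝ u (x, s)‖ := by
      intro x
      rcases eq_or_lt_of_le hyz with rfl | hyz'
      · simp
      have hsub : Set.uIcc y z ⊆ Set.Ioo (0:ℝ) 1 := by
        rw [Set.uIcc_of_le hyz]
        intro s hs
        exact ⟨lt_of_lt_of_le h0y hs.1, lt_of_le_of_lt hs.2 hz1⟩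
      have hderiv : ∀ s ∈ Set.uIcc y z,
          HasDerivAt (fun t => u (x, t)) ((fderiv ℝ u (x, s)) (0, 1)) s := by
        intro s hs
        have hdiff : DifferentiableAt ℝ u (x, s) :=
          (hu.differentiableOn one_ne_zero).differentiableAt
            (hopen.mem_nhds ⟨trivial, hsub hs⟩)
        have h2 : HasDerivAt (fun t : ℝ => ((x, t) : EuclideanSpace ℝ (Fin d) × ℝ))
            ((0 : EuclideanSpace ℝ (Fin d)), (1:ℝ)) s :=
          HasDerivAt.prodMk (hasDerivAt_const s x) (hasDerivAt_id s)
        exact hdiff.hasFDerivAt.comp_hasDerivAt s h2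
      have hcontD : ContinuousOn (fun s : ℝ => fderiv ℝ u (x, s)) (Set.uIcc y z) := by
        have h1 := hu.continuousOn_fderiv_of_isOpen hopen le_rfl
        exact h1.comp (Continuous.continuousOn (by continuity))
          (fun s hs => ⟨trivial, hsub hs⟩)
      have hcont : ContinuousOn
          (fun s => (fderiv ℝ u (x, s)) ((0 : EuclideanSpace ℝ (Fin d)), (1:ℝ)))
          (Set.uIcc y z) := hcontD.clm_apply continuousOn_const
      have hint : IntervalIntegrable
          (fun s => (fderiv ℝ u (x, s)) ((0 : EuclideanSpace ℝ (Fin d)), (1:ℝ)))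
          volume y z := hcont.intervalIntegrable
      have hintnorm : IntegrableOn (fun s : ℝ => ‖fderiv ℝ u (x, s)‖) (Set.Ioc y z) := by
        have : IntegrableOn (fun s : ℝ => ‖fderiv ℝ u (x, s)‖) (Set.Icc y z) := by
          refine ContinuousOn.integrableOn_Icc ?_
          have := hcontD.norm
          rwa [Set.uIcc_of_le hyz] at this
        exact this.mono_set Set.Ioc_subset_Icc_self
      have hftc := intervalIntegral.integral_eq_sub_of_hasDerivAt hderiv hint
      have h4 : u (x, y) = u (x, z)
          - ∫ s in y..z, (fderiv ℝ u (x, s)) ((0 : EuclideanSpace ℝ (Fin d)), (1:ℝ)) := by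
        rw [hftc]; ring
      have h3 : |u (x, y)| ≤ |u (x, z)| + ∫ s in Set.Ioc y z, ‖fderiv ℝ u (x, s)‖ := by
        calc |u (x, y)| ≤ |u (x, z)|
              + |∫ s in y..z, (fderiv ℝ u (x, s)) ((0 : EuclideanSpace ℝ (Fin d)), (1:ℝ))| := by
              rw [h4]; exact abs_sub _ _
          _ ≤ _ := by
              refine add_le_add le_rfl ?_
              refine le_trans (intervalIntegral.abs_integral_le_integral_abs hyz) ?_
              rw [intervalIntegral.integral_of_le hyz]
              have hint2 : IntegrableOn
                  (fun s : ℝ => |(fderiv ℝ u (x, s)) ((0 : EuclideanSpace ℝ (Fin d)), (1:ℝ))|)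
                  (Set.Ioc y z) := by
                have h7 : IntegrableOn
                    (fun s : ℝ => |(fderiv ℝ u (x, s)) ((0 : EuclideanSpace ℝ (Fin d)), (1:ℝ))|)
                    (Set.Icc y z) := by
                  refine ContinuousOn.integrableOn_Icc ?_
                  have := hcont.abs
                  rwa [Set.uIcc_of_le hyz] at this
                exact h7.mono_set Set.Ioc_subset_Icc_self
              refine setIntegral_mono_on hint2 hintnorm measurableSet_Ioc ?_
              intro s hs
              have h8 : |(fderiv ℝ u (x, s)) ((0 : EuclideanSpace ℝ (Fin d)), (1:ℝ))|
                  = ‖(fderiv ℝ u (x, s)) ((0 : EuclideanSpace ℝ (Fin d)), (1:ℝ))‖ :=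
                (Real.norm_eq_abs _).symm
              rw [h8]
              refine le_trans ((fderiv ℝ u (x, s)).le_opNorm _) ?_
              have hnrm : ‖((0 : EuclideanSpace ℝ (Fin d)), (1:ℝ))‖ = 1 := by
                simp [Prod.norm_def]
              rw [hnrm, mul_one]
      have h6 : ENNReal.ofReal (∫ s in Set.Ioc y z, ‖fderiv ℝ u (x, s)‖)
          = ∫⁻ s in Set.Ioc y z, ENNReal.ofReal ‖fderiv ℝ u (x, s)‖ :=
        ofReal_integral_eq_lintegral_ofReal hintnorm
          (ae_of_all _ fun s => norm_nonneg _)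
      calc ENNReal.ofReal |u (x, y)|
          ≤ ENNReal.ofReal (|u (x, z)| + ∫ s in Set.Ioc y z, ‖fderiv ℝ u (x, s)‖) :=
            ENNReal.ofReal_le_ofReal h3
        _ = ENNReal.ofReal |u (x, z)|
            + ENNReal.ofReal (∫ s in Set.Ioc y z, ‖fderiv ℝ u (x, s)‖) :=
            ENNReal.ofReal_add (abs_nonneg _)
              (setIntegral_nonneg measurableSet_Ioc fun s _ => norm_nonneg _)
        _ = _ := by rw [h6]
    set B : EuclideanSpace ℝ (Fin d) → ℝ≥0∞ :=
      fun x => ∫⁻ s in Set.Ioc y z, ENNReal.ofReal ‖fderiv ℝ u (x, s)‖ with hB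
    have hjm : Measurable fun w : EuclideanSpace ℝ (Fin d) × ℝ =>
        ENNReal.ofReal ‖fderiv ℝ u w‖ := (measurable_fderiv ℝ u).norm.ennreal_ofReal
    have hBmeas : Measurable B := hjm.lintegral_prod_right'
    have hA := humeas z h0z hz1
    calc F y = (∫⁻ x, (ENNReal.ofReal |u (x, y)|) ^ p) ^ (1/p) := by
          simp only [hF]
          congr 1
          refine lintegral_congr fun x => ?_
          rw [ENNReal.ofReal_rpow_of_nonneg (abs_nonneg _) hp0.le]
      _ ≤ (∫⁻ x, (ENNReal.ofReal |u (x, z)| + B x) ^ p) ^ (1/p) := by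
          refine ENNReal.rpow_le_rpow (lintegral_mono fun x => ?_) (by positivity)
          exact ENNReal.rpow_le_rpow (hptwise x) hp0.le
      _ ≤ (∫⁻ x, (ENNReal.ofReal |u (x, z)|) ^ p) ^ (1/p) + (∫⁻ x, B x ^ p) ^ (1/p) :=
          ENNReal.lintegral_Lp_add_le hA.aemeasurable hBmeas.aemeasurable hp
      _ ≤ F z + ∫⁻ s in Set.Ioc y z, G s := by
          refine add_le_add (le_of_eq ?_) ?_
          · simp only [hF]
            congr 1
            refine lintegral_congr fun x => ?_
            rw [ENNReal.ofReal_rpow_of_nonneg (abs_nonneg _) hp0.le]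
          · have hmink := minkowski_lintegral volume (volume.restrict (Set.Ioc y z)) hp
              (f := fun (x : EuclideanSpace ℝ (Fin d)) (s : ℝ) =>
                ENNReal.ofReal ‖fderiv ℝ u (x, s)‖) hjm
            refine hmink.trans (le_of_eq ?_)
            refine lintegral_congr fun s => ?_
            simp only [hG]
            congr 1
            refine lintegral_congr fun x => ?_
            rw [ENNReal.ofReal_rpow_of_nonneg (norm_nonneg _) hp0.le]
  -- divergence of the weight near 0
  have hIooTop : ∀ δ : ℝ, 0 < δ →
      (∫⁻ y in Set.Ioo (0:ℝ) δ, ENNReal.ofReal (y ^ α)) = ⊤ := by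
    intro δ hδ
    set m := min δ 1 with hm
    have hm0 : 0 < m := lt_min hδ zero_lt_one
    have hsub : Set.Ioo (0:ℝ) m ⊆ Set.Ioo 0 δ := Set.Ioo_subset_Ioo le_rfl (min_le_left _ _)
    rw [eq_top_iff]
    calc (⊤:ℝ≥0∞) = ∫⁻ y in Set.Ioo (0:ℝ) m, ENNReal.ofReal (y ^ α) := by
          by_contra h
          have hne : (∫⁻ y in Set.Ioo (0:ℝ) m, ENNReal.ofReal (y ^ α)) ≠ ⊤ :=
            fun ht => h ht.symm
          have hnn : 0 ≤ᵐ[volume.restrict (Set.Ioo (0:ℝ) m)] fun y => y ^ α := by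
            filter_upwards [ae_restrict_mem measurableSet_Ioo] with y hy
            exact Real.rpow_nonneg hy.1.le _
          have hint : IntegrableOn (fun y : ℝ => y ^ α) (Set.Ioo 0 m) :=
            ⟨(measurable_id.pow_const α).aestronglyMeasurable,
              (hasFiniteIntegral_iff_ofReal hnn).mpr (lt_top_iff_ne_top.mpr hne)⟩
          have := (intervalIntegral.integrableOn_Ioo_rpow_iff hm0).mp hint
          linarith
      _ ≤ _ := lintegral_mono' (Measure.restrict_mono hsub le_rfl) le_rfl
  -- Key estimate 2 : smallness of ∫ G near 0
  have hkey2 : ∀ ε : ℝ≥0∞, 0 < ε → ε ≠ ⊤ → ∃ δ : ℝ, δ ∈ Set.Ioo (0:ℝ) 1 ∧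
      (∫⁻ s in Set.Ioc (0:ℝ) δ, G s) ≤ ε := by
    intro ε hε0 hεt
    set q' := Real.conjExponent q with hq'
    have hqq' : q.HolderConjugate q' := Real.HolderConjugate.conjExponent hq1
    have hq'0 : 0 < q' := hqq'.symm.pos
    set β : ℝ := (-(α/q)) * q' with hβ
    have hβ0 : 0 < β := by
      have h : 0 < -(α/q) := by
        rw [neg_pos]
        exact div_neg_of_neg_of_pos hα0 hq0
      exact mul_pos h hq'0
    set D := ∫⁻ y in Set.Ioo (0:ℝ) 1, G y ^ q * ENNReal.ofReal (y ^ α) with hD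
    have hDne : D ≠ ⊤ := by
      rw [hD]
      simp_rw [hGq]
      exact hDfin
    set C := D ^ (1/q) with hC
    have hCne : C ≠ ⊤ := ENNReal.rpow_ne_top_of_nonneg (by positivity) hDne
    have hbound : ∀ δ : ℝ, 0 < δ → δ < 1 →
        (∫⁻ s in Set.Ioc (0:ℝ) δ, G s) ≤ C * (ENNReal.ofReal δ) ^ (1/q') := by
      intro δ h0 h1
      have hmsI : MeasurableSet (Set.Ioc (0:ℝ) δ) := measurableSet_Ioc
      calc (∫⁻ s in Set.Ioc (0:ℝ) δ, G s)
          = ∫⁻ s in Set.Ioc (0:ℝ) δ,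
              (G s * ENNReal.ofReal (s ^ (α/q))) * ENNReal.ofReal (s ^ (-(α/q))) := by
            refine setLIntegral_congr_fun hmsI (fun s hs => ?_)
            rw [mul_assoc, ← ENNReal.ofReal_mul (Real.rpow_nonneg hs.1.le _),
              ← Real.rpow_add hs.1, add_neg_cancel, Real.rpow_zero, ENNReal.ofReal_one, mul_one]
        _ ≤ (∫⁻ s in Set.Ioc (0:ℝ) δ, (G s * ENNReal.ofReal (s ^ (α/q))) ^ q) ^ (1/q)
              * (∫⁻ s in Set.Ioc (0:ℝ) δ, (ENNReal.ofReal (s ^ (-(α/q)))) ^ q') ^ (1/q') := by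
            refine ENNReal.lintegral_mul_le_Lp_mul_Lq _ hqq' ?_ ?_
            · exact (hGmeas.mul ((measurable_id.pow_const _).ennreal_ofReal)).aemeasurable
            · exact ((measurable_id.pow_const _).ennreal_ofReal).aemeasurable
        _ ≤ C * (ENNReal.ofReal δ) ^ (1/q') := by
            refine mul_le_mul' (ENNReal.rpow_le_rpow ?_ (by positivity))
              (ENNReal.rpow_le_rpow ?_ (by positivity))
            · calc ∫⁻ s in Set.Ioc (0:ℝ) δ, (G s * ENNReal.ofReal (s ^ (α/q))) ^ q
                  = ∫⁻ s in Set.Ioc (0:ℝ) δ, G s ^ q * ENNReal.ofReal (s ^ α) := by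
                    refine setLIntegral_congr_fun hmsI (fun s hs => ?_)
                    rw [ENNReal.mul_rpow_of_nonneg _ _ hq0.le,
                      ENNReal.ofReal_rpow_of_pos (Real.rpow_pos_of_pos hs.1 _),
                      ← Real.rpow_mul hs.1.le, div_mul_cancel₀ _ hq0.ne']
                _ ≤ D := by
                    refine lintegral_mono' (Measure.restrict_mono ?_ le_rfl) le_rfl
                    intro s hs
                    exact ⟨hs.1, lt_of_le_of_lt hs.2 h1⟩
            · calc ∫⁻ s in Set.Ioc (0:ℝ) δ, (ENNReal.ofReal (s ^ (-(α/q)))) ^ q'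
                  = ∫⁻ s in Set.Ioc (0:ℝ) δ, ENNReal.ofReal (s ^ β) := by
                    refine setLIntegral_congr_fun hmsI (fun s hs => ?_)
                    rw [ENNReal.ofReal_rpow_of_pos (Real.rpow_pos_of_pos hs.1 _),
                      ← Real.rpow_mul hs.1.le]
                _ ≤ ∫⁻ _ in Set.Ioc (0:ℝ) δ, ENNReal.ofReal (δ ^ β) := by
                    refine lintegral_mono_ae ?_
                    filter_upwards [ae_restrict_mem hmsI] with s hs
                    exact ENNReal.ofReal_le_ofReal
                      (Real.rpow_le_rpow hs.1.le hs.2 hβ0.le)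
                _ = ENNReal.ofReal (δ ^ β) * ENNReal.ofReal δ := by
                    rw [setLIntegral_const, Real.volume_Ioc, sub_zero]
                _ ≤ ENNReal.ofReal δ := by
                    refine mul_le_of_le_one_left zero_le ?_
                    rw [← ENNReal.ofReal_one]
                    exact ENNReal.ofReal_le_ofReal
                      (Real.rpow_le_one h0.le h1.le hβ0.le)
    rcases eq_or_ne C 0 with hC0 | hC0
    · refine ⟨1/2, ⟨by norm_num, by norm_num⟩, ?_⟩
      refine le_trans (hbound _ (by norm_num) (by norm_num)) ?_
      simp [hC0]
    · set r := (ε / C) ^ q' with hr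
      have hdiv0 : 0 < ε / C := ENNReal.div_pos hε0.ne' hCne
      have hdivt : ε / C ≠ ⊤ := by
        simp only [Ne, ENNReal.div_eq_top, not_or]
        exact ⟨fun h => absurd h.2 hC0, fun h => absurd h.1 hεt⟩
      have hr0 : 0 < r := ENNReal.rpow_pos hdiv0 hdivt
      have hrne : r ≠ ⊤ := ENNReal.rpow_ne_top_of_nonneg hq'0.le hdivt
      have hrt : 0 < r.toReal := ENNReal.toReal_pos hr0.ne' hrne
      refine ⟨min (1/2) (r.toReal/2), ⟨lt_min (by norm_num) (by linarith),
        lt_of_le_of_lt (min_le_left _ _) (by norm_num)⟩, ?_⟩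
      refine le_trans (hbound _ (lt_min (by norm_num) (by linarith))
        (lt_of_le_of_lt (min_le_left _ _) (by norm_num))) ?_
      have h1 : ENNReal.ofReal (min (1/2) (r.toReal/2)) ≤ r := by
        refine le_of_lt ?_
        refine lt_of_le_of_lt (ENNReal.ofReal_le_ofReal (min_le_right _ _)) ?_
        rw [ENNReal.ofReal_lt_iff_lt_toReal (by linarith) hrne]
        linarith
      calc C * (ENNReal.ofReal (min (1/2) (r.toReal/2))) ^ (1/q')
          ≤ C * r ^ (1/q') := by
            exact mul_le_mul' le_rfl (ENNReal.rpow_le_rpow h1 (by positivity))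
        _ = C * (ε / C) := by
            rw [hr, ← ENNReal.rpow_mul, mul_one_div, div_self hq'0.ne', ENNReal.rpow_one]
        _ ≤ ε := ENNReal.mul_div_le
  -- Key estimate 3 : existence of good slices
  have hkey3 : ∀ ε : ℝ≥0∞, 0 < ε → ε ≠ ⊤ → ∀ δ : ℝ, δ ∈ Set.Ioo (0:ℝ) 1 →
      ∃ z ∈ Set.Ioo (0:ℝ) δ, F z ≤ ε := by
    intro ε hε0 hεt δ hδ
    by_contra hcon
    push_neg at hcon
    apply hfin
    rw [eq_top_iff]
    have hεq0 : ε ^ q ≠ 0 := by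
      simp [ENNReal.rpow_eq_zero_iff, hε0.ne', hεt, not_lt.mpr hq0.le]
    have hεqt : ε ^ q ≠ ⊤ := by
      simp [ENNReal.rpow_eq_top_iff, hε0.ne', hεt, not_lt.mpr hq0.le]
    calc (⊤:ℝ≥0∞) = ε ^ q * ∫⁻ y in Set.Ioo (0:ℝ) δ, ENNReal.ofReal (y ^ α) := by
          rw [hIooTop δ hδ.1, ENNReal.mul_top hεq0]
      _ = ∫⁻ y in Set.Ioo (0:ℝ) δ, ε ^ q * ENNReal.ofReal (y ^ α) :=
          (lintegral_const_mul' _ _ hεqt).symm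
      _ ≤ ∫⁻ y in Set.Ioo (0:ℝ) δ,
            (∫⁻ x, ENNReal.ofReal (|u (x, y)| ^ p)) ^ (q / p) * ENNReal.ofReal (y ^ α) := by
          refine lintegral_mono_ae ?_
          filter_upwards [ae_restrict_mem measurableSet_Ioo] with y hy
          refine mul_le_mul' ?_ le_rfl
          rw [← hFq]
          exact ENNReal.rpow_le_rpow (hcon y hy).le hq0.le
      _ ≤ ∫⁻ y in Set.Ioo (0:ℝ) 1,
            (∫⁻ x, ENNReal.ofReal (|u (x, y)| ^ p)) ^ (q / p) * ENNReal.ofReal (y ^ α) :=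
          lintegral_mono' (Measure.restrict_mono
            (Set.Ioo_subset_Ioo le_rfl hδ.2.le) le_rfl) le_rfl
  -- conclusion
  rw [ENNReal.tendsto_nhds_zero]
  intro ε hε
  set ε' : ℝ≥0∞ := min ε 1 with hε'
  have hε'0 : 0 < ε' := lt_min hε zero_lt_one
  have hε'2 : (0:ℝ≥0∞) < ε' / 2 := ENNReal.div_pos hε'0.ne' (by norm_num)
  have hε'2t : ε' / 2 ≠ ⊤ := by
    refine ne_top_of_le_ne_top (by norm_num : (1:ℝ≥0∞) ≠ ⊤) ?_
    exact le_trans (ENNReal.half_le_self) (min_le_right _ _)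
  obtain ⟨δ, hδ, hδG⟩ := hkey2 (ε'/2) hε'2 hε'2t
  obtain ⟨z, hz, hzF⟩ := hkey3 (ε'/2) hε'2 hε'2t δ hδ
  filter_upwards [Ioo_mem_nhdsGT hz.1] with y hy
  calc F y ≤ F z + ∫⁻ s in Set.Ioc y z, G s :=
        hkey1 y z hy.1 hy.2.le (lt_trans hz.2 hδ.2)
    _ ≤ ε'/2 + ∫⁻ s in Set.Ioc 0 δ, G s := by
        refine add_le_add hzF ?_
        exact lintegral_mono' (Measure.restrict_mono
          (Set.Ioc_subset_Ioc hy.1.le hz.2.le) le_rfl) le_rfl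
    _ ≤ ε'/2 + ε'/2 := add_le_add le_rfl hδG
    _ = ε' := ENNReal.add_halves ε'
    _ ≤ ε := min_le_left _ _
end

section
/- Let p ∈ [1, ∞) and f ∈ L_p(ℝ^d). There exists N = N(d) > 0 such that for every h ∈ ℝ^d with h ≠ 0, ‖Δ_h f‖_{L_p(ℝ^d)} ≤ N |h|^{−d} ∫_{B_{|h|}} ‖Δ_η f‖_{L_p(ℝ^d)} dη, where B_{|h|} is the ball of radius |h| centered at the origin. -/
open MeasureTheory ENNReal

/-- Averaging estimate for differences: there is `N = N(d) > 0` such that for every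
`f ∈ L_p(ℝ^d)` and every `h ≠ 0`,
`‖Δ_h f‖_{L_p} ≤ N |h|^{-d} ∫_{B_{|h|}} ‖Δ_η f‖_{L_p} dη`. -/
theorem difference_average_estimate (d : ℕ) :
    ∃ N : ℝ, 0 < N ∧ ∀ (p : ℝ), 1 ≤ p →
      ∀ f : EuclideanSpace ℝ (Fin d) → ℝ, MemLp f (ENNReal.ofReal p) →
      ∀ h : EuclideanSpace ℝ (Fin d), h ≠ 0 →
        eLpNorm (fun x => f (x + h) - f x) (ENNReal.ofReal p) volume
          ≤ ENNReal.ofReal N * ENNReal.ofReal (‖h‖ ^ (-(d : ℝ))) *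
            ∫⁻ η in Metric.ball (0 : EuclideanSpace ℝ (Fin d)) ‖h‖,
              eLpNorm (fun x => f (x + η) - f x) (ENNReal.ofReal p) volume := by
  rcases Nat.eq_zero_or_pos d with rfl | hd
  · refine ⟨1, one_pos, fun p hp f hf h hne => absurd (Subsingleton.elim h 0) hne⟩
  · set E := EuclideanSpace ℝ (Fin d) with hE
    haveI : Nontrivial E := by
      apply Module.nontrivial_of_finrank_pos (R := ℝ)
      show 0 < Module.finrank ℝ (EuclideanSpace ℝ (Fin d))
      rw [finrank_euclideanSpace_fin]; exact hd
    set B1 := volume (Metric.ball (0 : E) 1) with hB1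
    have hB1pos : 0 < B1 := Metric.measure_ball_pos _ _ one_pos
    have hB1lt : B1 < ⊤ := measure_ball_lt_top
    set t := B1.toReal with ht
    have htpos : 0 < t := ENNReal.toReal_pos hB1pos.ne' hB1lt.ne
    refine ⟨2 * 2 ^ d / t, by positivity, ?_⟩
    intro p hp f hf h hne
    have hp0 : (0:ℝ) < p := lt_of_lt_of_le one_pos hp
    set q := ENNReal.ofReal p with hq
    have hq1 : 1 ≤ q := by
      rw [hq, ← ENNReal.ofReal_one]; exact ENNReal.ofReal_le_ofReal hp
    have hq0 : q ≠ 0 := (lt_of_lt_of_le one_pos hq1).ne'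
    have hqtop : q ≠ ⊤ := ENNReal.ofReal_ne_top
    -- measurable representative
    obtain ⟨f', hf'sm, hff'⟩ := hf.aestronglyMeasurable
    have hf'm : Measurable f' := hf'sm.measurable
    have key : ∀ η : E, eLpNorm (fun x => f (x + η) - f x) q volume
        = eLpNorm (fun x => f' (x + η) - f' x) q volume := by
      intro η
      apply eLpNorm_congr_ae
      have hmp := measurePreserving_add_right (volume : Measure E) η
      have h1 : (fun x : E => f (x + η)) =ᵐ[volume] fun x => f' (x + η) := by
        have := ae_eq_comp (f := fun x : E => x + η) hmp.measurable.aemeasurable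
          (g := f) (g' := f') (by rwa [hmp.map_eq])
        exact this
      exact h1.sub hff'
    set g : E → ℝ≥0∞ := fun η => eLpNorm (fun x => f' (x + η) - f' x) q volume with hg
    -- measurability of g
    have hgm : Measurable g := by
      have hrw : ∀ η : E, g η
          = (∫⁻ x, (‖f' (x + η) - f' x‖₊ : ℝ≥0∞) ^ p ∂(volume : Measure E)) ^ (1 / p) := by
        intro η
        show eLpNorm (fun x => f' (x + η) - f' x) q volume = _
        rw [eLpNorm_eq_lintegral_rpow_enorm_toReal hq0 hqtop, hq,
          ENNReal.toReal_ofReal hp0.le]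
        rfl
      simp only [funext hrw]
      apply Measurable.pow_const
      apply Measurable.lintegral_prod_right'
        (f := fun z : E × E => (‖f' (z.2 + z.1) - f' z.2‖₊ : ℝ≥0∞) ^ p)
      apply Measurable.pow_const
      exact ((hf'm.comp (measurable_snd.add measurable_fst)).sub
        (hf'm.comp measurable_snd)).nnnorm.coe_nnreal_ennreal
    -- triangle inequality
    have tri : ∀ η : E, g h ≤ g η + g (h - η) := by
      intro η
      set G : E → ℝ := fun y => f' (y + (h - η)) - f' y with hG
      have e1 : (fun x : E => f' (x + h) - f' x)
          = (fun x : E => f' (x + η) - f' x) + G ∘ (· + η) := by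
        funext x
        have hxy : x + η + (h - η) = x + h := by abel
        simp only [Pi.add_apply, Function.comp_apply, hG, hxy]; ring
      have m1 : AEStronglyMeasurable (fun x : E => f' (x + η) - f' x) volume :=
        ((hf'm.comp (measurable_add_const η)).sub hf'm).aestronglyMeasurable
      have hGmeas : Measurable G := (hf'm.comp (measurable_add_const (h - η))).sub hf'm
      have hGm : AEStronglyMeasurable G volume := hGmeas.aestronglyMeasurable
      have m2 : AEStronglyMeasurable (G ∘ (· + η)) volume :=
        (hGmeas.comp (measurable_add_const η)).aestronglyMeasurable
      have htrans : eLpNorm (G ∘ (· + η)) q volume = g (h - η) :=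
        eLpNorm_comp_measurePreserving hGm
          (measurePreserving_add_right (volume : Measure E) η)
      calc g h = eLpNorm ((fun x : E => f' (x + η) - f' x) + G ∘ (· + η)) q volume := by
            show eLpNorm (fun x => f' (x + h) - f' x) q volume = _
            rw [e1]
        _ ≤ eLpNorm (fun x : E => f' (x + η) - f' x) q volume
              + eLpNorm (G ∘ (· + η)) q volume :=
            eLpNorm_add_le m1 m2 hq1
        _ = g η + g (h - η) := by rw [htrans]
    -- geometric setup
    have hh0 : (0:ℝ) < ‖h‖ := norm_pos_iff.2 hne
    set c : E := (2⁻¹ : ℝ) • h with hc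
    set r : ℝ := ‖h‖ / 2 with hr
    have hrpos : 0 < r := by positivity
    have hnc : ‖c‖ = r := by
      rw [hc, hr, norm_smul]; simp [abs_of_pos]; ring
    have hcc : c + c = h := by
      rw [hc, ← add_smul]; norm_num
    set B : Set E := Metric.ball c r with hB
    have hsub : B ⊆ Metric.ball (0 : E) ‖h‖ := by
      intro x hx
      rw [hB, Metric.mem_ball] at hx
      rw [Metric.mem_ball, dist_zero_right]
      calc ‖x‖ = ‖(x - c) + c‖ := by rw [sub_add_cancel]
        _ ≤ ‖x - c‖ + ‖c‖ := norm_add_le _ _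
        _ < r + r := by rw [hnc]; exact add_lt_add_left (by rwa [dist_eq_norm] at hx) r
        _ = ‖h‖ := by rw [hr]; ring
    have hpre : (fun x : E => h - x) ⁻¹' B = B := by
      ext x
      simp only [Set.mem_preimage, hB, Metric.mem_ball, dist_eq_norm]
      have : h - x - c = -(x - c) := by rw [← hcc]; abel
      rw [this, norm_neg, dist_eq_norm]
    -- averaging
    have step1 : g h * volume B ≤ 2 * ∫⁻ η in Metric.ball (0 : E) ‖h‖, g η := by
      calc g h * volume B = ∫⁻ _η in B, g h := (setLIntegral_const _ _).symm
        _ ≤ ∫⁻ η in B, (g η + g (h - η)) := lintegral_mono fun η => tri η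
        _ = (∫⁻ η in B, g η) + ∫⁻ η in B, g (h - η) := lintegral_add_left hgm _
        _ = (∫⁻ η in B, g η) + ∫⁻ η in B, g η := by
            congr 1
            have hmp : MeasurePreserving (fun x : E => h - x) volume volume :=
              Measure.measurePreserving_sub_left volume h
            have := hmp.setLIntegral_comp_preimage (s := B) measurableSet_ball hgm
            rw [hpre] at this
            exact this
        _ = 2 * ∫⁻ η in B, g η := (two_mul _).symm
        _ ≤ 2 * ∫⁻ η in Metric.ball (0 : E) ‖h‖, g η := by
            exact mul_le_mul_right (lintegral_mono_set hsub) 2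
    -- compute volume B
    have hVB : volume B = ENNReal.ofReal (r ^ d * t) := by
      rw [hB, Measure.addHaar_ball (volume : Measure E) c hrpos.le]
      have hfr : Module.finrank ℝ E = d := finrank_euclideanSpace_fin
      rw [hfr, ← hB1, ENNReal.ofReal_mul (by positivity : (0:ℝ) ≤ r ^ d), ht,
        ENNReal.ofReal_toReal hB1lt.ne]
    have hVne0 : volume B ≠ 0 := by
      rw [hVB]; simp only [ne_eq, ENNReal.ofReal_eq_zero, not_le]; positivity
    have hVtop : volume B ≠ ⊤ := by rw [hVB]; exact ENNReal.ofReal_ne_top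
    -- scalar comparison
    have hreal : (r ^ d * t)⁻¹ * 2 = (2 * 2 ^ d / t) * ‖h‖ ^ (-(d : ℝ)) := by
      rw [Real.rpow_neg (norm_nonneg h), Real.rpow_natCast, hr]
      rw [div_pow]
      field_simp
    have hscal : (volume B)⁻¹ * 2
        = ENNReal.ofReal (2 * 2 ^ d / t) * ENNReal.ofReal (‖h‖ ^ (-(d : ℝ))) := by
      calc (volume B)⁻¹ * 2
          = ENNReal.ofReal ((r ^ d * t)⁻¹) * ENNReal.ofReal 2 := by
            rw [hVB, ← ENNReal.ofReal_inv_of_pos (by positivity), ENNReal.ofReal_ofNat]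
        _ = ENNReal.ofReal ((r ^ d * t)⁻¹ * 2) := (ENNReal.ofReal_mul (by positivity)).symm
        _ = ENNReal.ofReal ((2 * 2 ^ d / t) * ‖h‖ ^ (-(d : ℝ))) := by rw [hreal]
        _ = ENNReal.ofReal (2 * 2 ^ d / t) * ENNReal.ofReal (‖h‖ ^ (-(d : ℝ))) :=
            ENNReal.ofReal_mul (by positivity)
    -- conclude
    calc eLpNorm (fun x => f (x + h) - f x) q volume = g h := key h
      _ = (volume B)⁻¹ * (g h * volume B) := by
          rw [mul_comm (g h) (volume B), ← mul_assoc, ENNReal.inv_mul_cancel hVne0 hVtop, one_mul]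
      _ ≤ (volume B)⁻¹ * (2 * ∫⁻ η in Metric.ball (0 : E) ‖h‖, g η) :=
          mul_le_mul_right step1 _
      _ = ((volume B)⁻¹ * 2) * ∫⁻ η in Metric.ball (0 : E) ‖h‖, g η := by
          rw [mul_assoc]
      _ = ENNReal.ofReal (2 * 2 ^ d / t) * ENNReal.ofReal (‖h‖ ^ (-(d : ℝ)))
            * ∫⁻ η in Metric.ball (0 : E) ‖h‖,
                eLpNorm (fun x => f (x + η) - f x) q volume := by
          rw [hscal]
          congr 1
          exact lintegral_congr fun η => (key η).symm
end

section
/- Let p ∈ [1, ∞) and f ∈ L_p(ℝ^d). There exists N = N(d) > 0 such that for every t > 0, ω(t, f)_p ≤ N ∫_{{|η| ≤ t}} |η|^{−d} ‖Δ_η f‖_{L_p(ℝ^d)} dη. -/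
open MeasureTheory ENNReal Metric

private lemma dmeas_aux {d : ℕ} {f : EuclideanSpace ℝ (Fin d) → ℝ}
    (hf : AEStronglyMeasurable f volume) (η : EuclideanSpace ℝ (Fin d)) :
    AEStronglyMeasurable (fun x => f (x + η) - f x) volume :=
  (hf.comp_quasiMeasurePreserving
    (measurePreserving_add_right volume η).quasiMeasurePreserving).sub hf

private lemma g_meas_aux {d : ℕ} {q : ℝ≥0∞} (hq0 : q ≠ 0) (hqt : q ≠ ⊤)
    {f : EuclideanSpace ℝ (Fin d) → ℝ} (hf : AEStronglyMeasurable f volume) :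
    Measurable (fun η : EuclideanSpace ℝ (Fin d) =>
      eLpNorm (fun x => f (x + η) - f x) q volume) := by
  set f' := hf.mk f with hf'def
  have hmf' : Measurable f' := hf.stronglyMeasurable_mk.measurable
  have key : ∀ η, eLpNorm (fun x => f (x + η) - f x) q volume
      = eLpNorm (fun x => f' (x + η) - f' x) q volume := by
    intro η
    apply eLpNorm_congr_ae
    have h1 : (fun x => f (x + η)) =ᵐ[volume] (fun x => f' (x + η)) :=
      (measurePreserving_add_right volume η).quasiMeasurePreserving.ae_eq_comp hf.ae_eq_mk
    exact h1.sub hf.ae_eq_mk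
  simp only [key, eLpNorm_eq_lintegral_rpow_enorm_toReal hq0 hqt]
  apply Measurable.pow_const
  apply Measurable.lintegral_prod_right'
    (f := fun z : (EuclideanSpace ℝ (Fin d)) × (EuclideanSpace ℝ (Fin d)) =>
      ‖f' (z.2 + z.1) - f' z.2‖ₑ ^ q.toReal)
  apply Measurable.pow_const
  apply Measurable.enorm
  exact ((hmf'.comp (measurable_snd.add measurable_fst)).sub (hmf'.comp measurable_snd))

private lemma g_subadd_aux {d : ℕ} {q : ℝ≥0∞} (hq1 : 1 ≤ q)
    {f : EuclideanSpace ℝ (Fin d) → ℝ} (hf : AEStronglyMeasurable f volume)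
    (h η : EuclideanSpace ℝ (Fin d)) :
    eLpNorm (fun x => f (x + h) - f x) q volume
      ≤ eLpNorm (fun x => f (x + η) - f x) q volume
        + eLpNorm (fun x => f (x + (h - η)) - f x) q volume := by
  set u : EuclideanSpace ℝ (Fin d) → ℝ := fun y => f (y + (h - η)) - f y with hu
  have hu_meas : AEStronglyMeasurable u volume := dmeas_aux hf (h - η)
  have hT : MeasurePreserving (· + η) (volume : Measure (EuclideanSpace ℝ (Fin d))) volume :=
    measurePreserving_add_right volume η
  have hcomp : eLpNorm (u ∘ (· + η)) q volume = eLpNorm u q volume :=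
    eLpNorm_comp_measurePreserving hu_meas hT
  have hsplit : (fun x => f (x + h) - f x)
      = (fun x => (u ∘ (· + η)) x + (f (x + η) - f x)) := by
    funext x
    simp only [Function.comp, hu]
    have : x + η + (h - η) = x + h := by abel
    rw [this]
    ring
  calc eLpNorm (fun x => f (x + h) - f x) q volume
      = eLpNorm (fun x => (u ∘ (· + η)) x + (f (x + η) - f x)) q volume := by rw [hsplit]
    _ ≤ eLpNorm (u ∘ (· + η)) q volume + eLpNorm (fun x => f (x + η) - f x) q volume :=
        eLpNorm_add_le (hu_meas.comp_quasiMeasurePreserving hT.quasiMeasurePreserving)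
          (dmeas_aux hf η) hq1
    _ = eLpNorm (fun x => f (x + η) - f x) q volume + eLpNorm u q volume := by
        rw [hcomp]; ring

/-- Modulus-of-continuity estimate: there is `N = N(d) > 0` such that for every
`f ∈ L_p(ℝ^d)` and every `t > 0`,
`ω(t, f)_p ≤ N ∫_{|η| ≤ t} |η|^{-d} ‖Δ_η f‖_{L_p} dη`, where
`ω(t, f)_p = sup_{|h| < t} ‖f(· + h) - f‖_{L_p}`. -/
theorem modulus_estimate (d : ℕ) :
    ∃ N : ℝ, 0 < N ∧ ∀ (p : ℝ), 1 ≤ p →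
      ∀ f : EuclideanSpace ℝ (Fin d) → ℝ, MemLp f (ENNReal.ofReal p) →
      ∀ t : ℝ, 0 < t →
        (⨆ h ∈ {h : EuclideanSpace ℝ (Fin d) | ‖h‖ < t},
            eLpNorm (fun x => f (x + h) - f x) (ENNReal.ofReal p) volume)
          ≤ ENNReal.ofReal N *
            ∫⁻ η in Metric.closedBall (0 : EuclideanSpace ℝ (Fin d)) t,
              ENNReal.ofReal (‖η‖ ^ (-(d : ℝ))) *
                eLpNorm (fun x => f (x + η) - f x) (ENNReal.ofReal p) volume := by
  set B : ℝ≥0∞ := volume (ball (0 : EuclideanSpace ℝ (Fin d)) 1) with hBdef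
  have hB0 : B ≠ 0 := (measure_ball_pos volume 0 one_pos).ne'
  have hBt : B ≠ ⊤ := measure_ball_lt_top.ne
  have hBpos : 0 < B.toReal := ENNReal.toReal_pos hB0 hBt
  refine ⟨2 ^ (d + 1) / B.toReal, by positivity, ?_⟩
  intro p hp f hf t ht
  set q := ENNReal.ofReal p with hq
  have hq0 : q ≠ 0 := by
    simp only [hq, ne_eq, ENNReal.ofReal_eq_zero, not_le]; linarith
  have hqt : q ≠ ⊤ := ENNReal.ofReal_ne_top
  have hq1 : (1 : ℝ≥0∞) ≤ q := by
    rw [hq, ← ENNReal.ofReal_one]; exact ENNReal.ofReal_le_ofReal hp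
  set g : EuclideanSpace ℝ (Fin d) → ℝ≥0∞ :=
    fun η => eLpNorm (fun x => f (x + η) - f x) q volume with hgdef
  have hgmeas : Measurable g := g_meas_aux hq0 hqt hf.1
  set I : ℝ≥0∞ := ∫⁻ η in closedBall (0 : EuclideanSpace ℝ (Fin d)) t,
      ENNReal.ofReal (‖η‖ ^ (-(d : ℝ))) * g η ∂volume with hIdef
  apply iSup₂_le
  intro h hht
  simp only [Set.mem_setOf_eq] at hht
  rcases eq_or_ne h 0 with rfl | hne
  · have h0 : (fun x : EuclideanSpace ℝ (Fin d) => f (x + 0) - f x) = fun _ => (0:ℝ) := by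
      funext x; simp
    show g 0 ≤ _
    rw [hgdef]
    simp only [h0, eLpNorm_zero']
    exact zero_le
  · have hh0 : 0 < ‖h‖ := norm_pos_iff.mpr hne
    set r : ℝ := ‖h‖ / 2 with hrdef
    have hr : 0 < r := half_pos hh0
    set c : EuclideanSpace ℝ (Fin d) := (2:ℝ)⁻¹ • h with hcdef
    have hcnorm : ‖c‖ = r := by
      rw [hcdef, norm_smul, norm_inv, Real.norm_ofNat, hrdef]; ring
    have hc2 : c + c = h := by
      rw [hcdef, ← add_smul]; norm_num
    set S : Set (EuclideanSpace ℝ (Fin d)) := ball c r with hSdef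
    have hS0 : volume S ≠ 0 := (measure_ball_pos volume c hr).ne'
    have hSt : volume S ≠ ⊤ := measure_ball_lt_top.ne
    have hmemS : ∀ η ∈ S, 0 < ‖η‖ ∧ ‖η‖ ≤ ‖h‖ := by
      intro η hη
      rw [hSdef, mem_ball, dist_eq_norm] at hη
      constructor
      · rcases eq_or_ne η 0 with rfl | hη0
        · exfalso
          rw [zero_sub, norm_neg, hcnorm] at hη
          exact lt_irrefl r hη
        · exact norm_pos_iff.mpr hη0
      · calc ‖η‖ = ‖(η - c) + c‖ := by rw [sub_add_cancel]
          _ ≤ ‖η - c‖ + ‖c‖ := norm_add_le _ _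
          _ ≤ r + r := by rw [hcnorm]; exact add_le_add_left hη.le r
          _ = ‖h‖ := by rw [hrdef]; ring
    have hsymm : ∀ η, h - η ∈ S ↔ η ∈ S := by
      intro η
      simp only [hSdef, mem_ball, dist_eq_norm]
      have hrewr : h - η - c = c - η := by rw [← hc2]; abel
      rw [hrewr, norm_sub_rev]
    have hsub : S ⊆ closedBall (0 : EuclideanSpace ℝ (Fin d)) t := by
      intro η hη
      rw [mem_closedBall, dist_zero_right]
      exact le_of_lt (lt_of_le_of_lt (hmemS η hη).2 hht)
    have step1 : volume S * g h ≤ ∫⁻ η in S, (g η + g (h - η)) ∂volume := by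
      calc volume S * g h = ∫⁻ _ in S, g h ∂volume := by rw [setLIntegral_const, mul_comm]
        _ ≤ _ := lintegral_mono fun η => g_subadd_aux hq1 hf.1 h η
    have step2 : (∫⁻ η in S, (g η + g (h - η)) ∂volume)
        = (∫⁻ η in S, g η ∂volume) + ∫⁻ η in S, g (h - η) ∂volume :=
      lintegral_add_left hgmeas _
    have step3 : (∫⁻ η in S, g (h - η) ∂volume) = ∫⁻ η in S, g η ∂volume := by
      have hpre : (fun η : EuclideanSpace ℝ (Fin d) => h - η) ⁻¹' S = S := by
        ext η
        simpa using hsymm η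
      have key := (Measure.measurePreserving_sub_left volume h).setLIntegral_comp_emb
        (MeasurableEquiv.subLeft h).measurableEmbedding g S
      have himg : (fun η : EuclideanSpace ℝ (Fin d) => h - η) '' S
          = (fun η : EuclideanSpace ℝ (Fin d) => h - η) ⁻¹' S :=
        congrFun (Set.image_eq_preimage_of_inverse (fun x => sub_sub_cancel h x)
          (fun x => sub_sub_cancel h x)) S
      rw [himg, hpre] at key
      exact key
    have hofnt : (ENNReal.ofReal (‖h‖ ^ (d:ℝ))) ≠ ⊤ := ENNReal.ofReal_ne_top
    have step4 : (∫⁻ η in S, g η ∂volume)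
        ≤ ENNReal.ofReal (‖h‖ ^ (d:ℝ)) *
          ∫⁻ η in S, ENNReal.ofReal (‖η‖ ^ (-(d : ℝ))) * g η ∂volume := by
      rw [← lintegral_const_mul' _ _ hofnt]
      apply setLIntegral_mono
      · exact (measurable_const.mul
          (((measurable_norm.pow_const _).ennreal_ofReal).mul hgmeas))
      · intro η hη
        obtain ⟨hη0, hηle⟩ := hmemS η hη
        rw [← mul_assoc, ← ENNReal.ofReal_mul (by positivity)]
        nth_rewrite 1 [← one_mul (g η)]
        apply mul_le_mul_left
        rw [show (1:ℝ≥0∞) = ENNReal.ofReal 1 by simp]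
        apply ENNReal.ofReal_le_ofReal
        rw [Real.rpow_neg (norm_nonneg _), ← div_eq_mul_inv,
          le_div_iff₀ (Real.rpow_pos_of_pos hη0 _), one_mul]
        exact Real.rpow_le_rpow (norm_nonneg _) hηle (Nat.cast_nonneg d)
    have chain : volume S * g h ≤ (2 * ENNReal.ofReal (‖h‖ ^ (d:ℝ))) * I := by
      calc volume S * g h ≤ ∫⁻ η in S, (g η + g (h - η)) ∂volume := step1
        _ = (∫⁻ η in S, g η ∂volume) + ∫⁻ η in S, g (h - η) ∂volume := step2
        _ = 2 * ∫⁻ η in S, g η ∂volume := by rw [step3, two_mul]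
        _ ≤ 2 * (ENNReal.ofReal (‖h‖ ^ (d:ℝ)) *
              ∫⁻ η in S, ENNReal.ofReal (‖η‖ ^ (-(d : ℝ))) * g η ∂volume) :=
            mul_le_mul_right step4 2
        _ ≤ 2 * (ENNReal.ofReal (‖h‖ ^ (d:ℝ)) * I) := by
            apply mul_le_mul_right
            apply mul_le_mul_right
            exact lintegral_mono_set hsub
        _ = (2 * ENNReal.ofReal (‖h‖ ^ (d:ℝ))) * I := by rw [mul_assoc]
    have hvolS : volume S = ENNReal.ofReal (r ^ d) * B := by
      rw [hSdef, Measure.addHaar_ball_of_pos volume c hr, finrank_euclideanSpace_fin]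
    have hhr : ‖h‖ = 2 * r := by rw [hrdef]; ring
    have hconst : (2 * ENNReal.ofReal (‖h‖ ^ (d:ℝ)))
        ≤ ENNReal.ofReal (2 ^ (d + 1) / B.toReal) * volume S := by
      rw [hvolS]
      apply le_of_eq
      have hrealeq : 2 * ‖h‖ ^ (d:ℝ) = (2 ^ (d + 1) / B.toReal) * (r ^ d * B.toReal) := by
        rw [Real.rpow_natCast, hhr, mul_pow]
        field_simp
        ring
      calc 2 * ENNReal.ofReal (‖h‖ ^ (d:ℝ))
          = ENNReal.ofReal (2 * ‖h‖ ^ (d:ℝ)) := by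
            rw [ENNReal.ofReal_mul (by norm_num : (0:ℝ) ≤ 2), ENNReal.ofReal_ofNat]
        _ = ENNReal.ofReal ((2 ^ (d + 1) / B.toReal) * (r ^ d * B.toReal)) := by
            rw [hrealeq]
        _ = ENNReal.ofReal (2 ^ (d + 1) / B.toReal) *
              ENNReal.ofReal (r ^ d * B.toReal) := by
            rw [ENNReal.ofReal_mul (by positivity)]
        _ = ENNReal.ofReal (2 ^ (d + 1) / B.toReal) * (ENNReal.ofReal (r ^ d) * B) := by
            rw [ENNReal.ofReal_mul (by positivity), ENNReal.ofReal_toReal hBt]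
    have final : volume S * g h ≤ volume S * (ENNReal.ofReal (2 ^ (d + 1) / B.toReal) * I) := by
      calc volume S * g h ≤ (2 * ENNReal.ofReal (‖h‖ ^ (d:ℝ))) * I := chain
        _ ≤ (ENNReal.ofReal (2 ^ (d + 1) / B.toReal) * volume S) * I :=
            mul_le_mul_left hconst I
        _ = volume S * (ENNReal.ofReal (2 ^ (d + 1) / B.toReal) * I) := by ring
    exact (ENNReal.mul_le_mul_iff_right hS0 hSt).mp final
end
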